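/- arXiv:2103.14159 — 6 statements merged into one kernel-verified Lean document; each statement's English description precedes it below -/
import Mathlib

section
/- Let 𝒜 be an abelian category and V a tilting object. Then V is Ext^1-universal: for every object A there exists a universal extension 0 → A → T → V^{(I)} → 0. Moreover, for any object A and any universal extension 0 → A → T → V^{(I)} → 0 of V by A, the middle term T belongs to V^{⊥1} = Gen(V). -/
/-!
Common definitions for formalizing results of "Tilting preenvelopes and cotilting
precovers in general Abelian categories" (Parra–Saorín–Virili).

Conventions:
* Full subcategories of an abelian category `C` are encoded as `Set C`.
* "Sets" (index sets of families, coproducts, …) are encoded as types in the universe `v`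
  of the morphisms of `C`.
* `Ext¹(X,Y) = 0` is encoded via the splitting of all short exact sequences
  `0 → Y → E → X → 0` (equivalently, the vanishing of the Yoneda Ext group).
* Relative (`…In B`) notions encode the corresponding notion computed inside the
  full (abelian exact) subcategory determined by `B : Set C`; the ambient case is
  `B = Set.univ`.
* Coproducts are not assumed to exist: a coproduct of a family existing in the
  (sub)category is encoded by a cocone with the universal property (`IsCoproductIn`).
-/

open CategoryTheory CategoryTheory.Limits

universe w v u

attribute [local instance] CategoryTheory.Abelian.hasFiniteBiproducts

namespace Paper

variable {C : Type u} [Category.{v} C] [Abelian C]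

/-- `(i, p)` is a short exact sequence `0 ⟶ A ⟶ E ⟶ B ⟶ 0` in `C`. -/
def IsShortExact {A E B : C} (i : A ⟶ E) (p : E ⟶ B) : Prop :=
  ∃ hw : i ≫ p = 0, (ShortComplex.mk i p hw).ShortExact

/-- `Q`, together with the injections `ι`, is the coproduct of the family `f`
inside the full subcategory determined by `B`. -/
structure IsCoproductIn (B : Set C) {I : Type v} (f : I → C) (Q : C)
    (ι : ∀ i, f i ⟶ Q) : Prop where
  mem : ∀ i, f i ∈ B
  memQ : Q ∈ B
  desc : ∀ Z ∈ B, ∀ g : (∀ i, f i ⟶ Z), ∃! h : Q ⟶ Z, ∀ i, ι i ≫ h = g i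

/-- `Ext¹(X, Y) = 0`, computed in the full subcategory determined by `B`:
every short exact sequence `0 → Y → E → X → 0` with `E ∈ B` splits. -/
def Ext1ZeroIn (B : Set C) (X Y : C) : Prop :=
  ∀ E ∈ B, ∀ (i : Y ⟶ E) (p : E ⟶ X), IsShortExact i p → ∃ r : E ⟶ Y, i ≫ r = 𝟙 Y

/-- `Ext¹(X, Y) = 0` in the ambient abelian category. -/
def Ext1Zero (X Y : C) : Prop := Ext1ZeroIn Set.univ X Y

/-- `V^{⊥₁}`, computed in (the full subcategory determined by) `B`. -/
def rightPerp (B : Set C) (V : C) : Set C := {A ∈ B | Ext1ZeroIn B V A}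

/-- `^{⊥₁}T`, computed in `B`. -/
def leftPerpSet (B T : Set C) : Set C := {A ∈ B | ∀ X ∈ T, Ext1ZeroIn B A X}

/-- `T^{⊥₁}`, computed in `B`. -/
def rightPerpSet (B T : Set C) : Set C := {A ∈ B | ∀ X ∈ T, Ext1ZeroIn B X A}

/-- `Sub(X)` relative to `B`: objects of `B` admitting a monomorphism into an object of `X`. -/
def subIn (B X : Set C) : Set C := {A ∈ B | ∃ T ∈ X, ∃ f : A ⟶ T, Mono f}

/-- `Quot(X)` relative to `B`: objects of `B` which are epimorphic images of objects of `X`. -/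
def quotIn (B X : Set C) : Set C := {A ∈ B | ∃ T ∈ X, ∃ f : T ⟶ A, Epi f}

/-- `(T, F)` is a torsion pair in (the full subcategory determined by) `B`. -/
structure IsTorsionPairIn (B T F : Set C) : Prop where
  eqF : F = {A ∈ B | ∀ X ∈ T, ∀ f : X ⟶ A, f = 0}
  eqT : T = {A ∈ B | ∀ Y ∈ F, ∀ f : A ⟶ Y, f = 0}
  seq : ∀ A ∈ B, ∃ (X Y : C) (i : X ⟶ A) (p : A ⟶ Y), X ∈ T ∧ Y ∈ F ∧ IsShortExact i p

/-- `T` is a torsion class in `B`. -/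
def IsTorsionClassIn (B T : Set C) : Prop := ∃ F, IsTorsionPairIn B T F

/-- `F` is a torsion-free class in `B`. -/
def IsTorsionFreeClassIn (B F : Set C) : Prop := ∃ T, IsTorsionPairIn B T F

/-- `φ : M ⟶ X` is a `T`-preenvelope. -/
structure IsPreenvelope (T : Set C) {M X : C} (φ : M ⟶ X) : Prop where
  mem : X ∈ T
  fac : ∀ T' ∈ T, ∀ g : M ⟶ T', ∃ h : X ⟶ T', φ ≫ h = g

/-- `φ` is a semi-special `T`-preenvelope (relative to `B`):
a `T`-preenvelope whose cokernel lies in `^{⊥₁}T` (computed in `B`). -/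
def IsSemiSpecialPreenvelopeIn (B T : Set C) {M X : C} (φ : M ⟶ X) : Prop :=
  IsPreenvelope T φ ∧ cokernel φ ∈ leftPerpSet B T

/-- `φ` is a special `T`-preenvelope (relative to `B`). -/
def IsSpecialPreenvelopeIn (B T : Set C) {M X : C} (φ : M ⟶ X) : Prop :=
  Mono φ ∧ IsSemiSpecialPreenvelopeIn B T φ

/-- `T` is preenveloping in `B`. -/
def PreenvelopingIn (B T : Set C) : Prop :=
  ∀ M ∈ B, ∃ (X : C) (φ : M ⟶ X), IsPreenvelope T φ

/-- `T` is semi-special preenveloping in `B`. -/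
def SemiSpecialPreenvelopingIn (B T : Set C) : Prop :=
  ∀ M ∈ B, ∃ (X : C) (φ : M ⟶ X), IsSemiSpecialPreenvelopeIn B T φ

/-- `T` is special preenveloping in `B`. -/
def SpecialPreenvelopingIn (B T : Set C) : Prop :=
  ∀ M ∈ B, ∃ (X : C) (φ : M ⟶ X), IsSpecialPreenvelopeIn B T φ

/-- `φ : X ⟶ M` is a `T`-precover. -/
structure IsPrecover (T : Set C) {X M : C} (φ : X ⟶ M) : Prop where
  mem : X ∈ T
  fac : ∀ T' ∈ T, ∀ g : T' ⟶ M, ∃ h : T' ⟶ X, h ≫ φ = g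

/-- `φ` is a semi-special `T`-precover (relative to `B`):
a `T`-precover whose kernel lies in `T^{⊥₁}` (computed in `B`). -/
def IsSemiSpecialPrecoverIn (B T : Set C) {X M : C} (φ : X ⟶ M) : Prop :=
  IsPrecover T φ ∧ kernel φ ∈ rightPerpSet B T

/-- `T` is precovering in `B`. -/
def PrecoveringIn (B T : Set C) : Prop :=
  ∀ M ∈ B, ∃ (X : C) (φ : X ⟶ M), IsPrecover T φ

/-- `T` is semi-special precovering in `B`. -/
def SemiSpecialPrecoveringIn (B T : Set C) : Prop :=
  ∀ M ∈ B, ∃ (X : C) (φ : X ⟶ M), IsSemiSpecialPrecoverIn B T φ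

/-- `Add(V)` relative to `B`: direct summands of coproducts (existing in `B`)
of copies of `V`. -/
def addIn (B : Set C) (V : C) : Set C :=
  {A ∈ B | ∃ (I : Type v) (Q : C) (ι : ∀ _ : I, V ⟶ Q),
     IsCoproductIn B (fun _ : I => V) Q ι ∧ ∃ (s : A ⟶ Q) (r : Q ⟶ A), s ≫ r = 𝟙 A}

/-- `Gen(V)` relative to `B`: quotients of objects of `Add(V)`. -/
def genIn (B : Set C) (V : C) : Set C :=
  {A ∈ B | ∃ X ∈ addIn B V, ∃ p : X ⟶ A, Epi p}

/-- `Pres(V)` relative to `B`: cokernels of morphisms between objects of `Add(V)`. -/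
def presIn (B : Set C) (V : C) : Set C :=
  {A ∈ B | ∃ X ∈ addIn B V, ∃ Y ∈ addIn B V,
     ∃ (f : X ⟶ Y) (c : Y ⟶ A) (hw : f ≫ c = 0), Epi c ∧ (ShortComplex.mk f c hw).Exact}

/-- `Ḡen(V) = Sub(Gen(V))` relative to `B`. -/
def barGenIn (B : Set C) (V : C) : Set C := subIn B (genIn B V)

/-- The class `X` is cogenerating in `B`. -/
def CogeneratingIn (B X : Set C) : Prop := ∀ A ∈ B, ∃ T ∈ X, ∃ f : A ⟶ T, Mono f

/-- The class `X` is generating in `B`. -/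
def GeneratingIn (B X : Set C) : Prop := ∀ A ∈ B, ∃ T ∈ X, ∃ f : T ⟶ A, Epi f

/-- `V` is a quasi-tilting object of (the full subcategory determined by) `B`:
`Gen(V)` is a torsion class and `Gen(V) = Pres(V) = Ḡen(V) ∩ V^{⊥₁}`. -/
def IsQuasiTiltingIn (B : Set C) (V : C) : Prop :=
  V ∈ B ∧ IsTorsionClassIn B (genIn B V) ∧ genIn B V = presIn B V ∧
    genIn B V = barGenIn B V ∩ rightPerp B V

/-- `V` is a tilting object of `B`: quasi-tilting with `Gen(V)` cogenerating. -/
def IsTiltingIn (B : Set C) (V : C) : Prop :=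
  IsQuasiTiltingIn B V ∧ CogeneratingIn B (genIn B V)

/-- `G` is an epi-generator of `B`: every object of `B` is an epimorphic image of a
coproduct (existing in `B`) of copies of `G`. -/
def IsEpiGeneratorIn (B : Set C) (G : C) : Prop :=
  G ∈ B ∧ ∀ A ∈ B, ∃ (I : Type v) (Q : C) (ι : ∀ _ : I, G ⟶ Q),
    IsCoproductIn B (fun _ : I => G) Q ι ∧ ∃ p : Q ⟶ A, Epi p

/-- `0 → A —u→ X → V^{(J)} → 0` is a universal extension of `V` by `A` (relative to `B`):
the right end of the sequence is a nonempty coproduct of copies of `V` existing in `B`,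
and the induced map `Ext¹(V,A) → Ext¹(V,X)` is zero (encoded: for every extension
`0 → A —i→ E → V → 0` with `E ∈ B`, its pushout along `u` splits, i.e. `u` extends
along `i`). -/
def IsUniversalExtensionIn (B : Set C) (V A X : C) (u : A ⟶ X) : Prop :=
  A ∈ B ∧ X ∈ B ∧
  (∃ (J : Type v) (_ : Nonempty J) (P : C) (κ : ∀ _ : J, V ⟶ P) (p : X ⟶ P),
     IsCoproductIn B (fun _ : J => V) P κ ∧ IsShortExact u p) ∧
  (∀ E ∈ B, ∀ (i : A ⟶ E) (q : E ⟶ V), IsShortExact i q → ∃ ψ : E ⟶ X, i ≫ ψ = u)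

/-- `V` is `Ext¹`-universal in `B`: universal extensions of `V` by every object exist. -/
def IsExt1UniversalIn (B : Set C) (V : C) : Prop :=
  ∀ A ∈ B, ∃ (X : C) (u : A ⟶ X), IsUniversalExtensionIn B V A X u

/-- `(X, Y)` is a cotorsion pair in (the full subcategory determined by) `B`. -/
def IsCotorsionPairIn (B X Y : Set C) : Prop :=
  Y = {A ∈ B | ∀ Z ∈ X, Ext1ZeroIn B Z A} ∧
  X = {A ∈ B | ∀ Z ∈ Y, Ext1ZeroIn B A Z}

/-- The pair `(X, Y)` is right complete in `B`: every `A ∈ B` admits a short exact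
sequence `0 → A → Y' → X' → 0` with `Y' ∈ Y`, `X' ∈ X`. -/
def RightCompleteIn (B X Y : Set C) : Prop :=
  ∀ A ∈ B, ∃ (Y' X' : C) (i : A ⟶ Y') (p : Y' ⟶ X'), Y' ∈ Y ∧ X' ∈ X ∧ IsShortExact i p

/-- The pair `(X, Y)` is left complete in `B`: every `A ∈ B` admits a short exact
sequence `0 → Y' → X' → A → 0` with `Y' ∈ Y`, `X' ∈ X`. -/
def LeftCompleteIn (B X Y : Set C) : Prop :=
  ∀ A ∈ B, ∃ (Y' X' : C) (i : Y' ⟶ X') (p : X' ⟶ A), Y' ∈ Y ∧ X' ∈ X ∧ IsShortExact i p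

/-- The full subcategory determined by `B` is reflective in `C`:
the (fully faithful) inclusion functor has a left adjoint. -/
def IsReflectiveSub (B : Set C) : Prop :=
  (ObjectProperty.ι (· ∈ B)).IsRightAdjoint

/-- The full subcategory determined by `B` is coreflective in `C`:
the inclusion functor has a right adjoint. -/
def IsCoreflectiveSub (B : Set C) : Prop :=
  (ObjectProperty.ι (· ∈ B)).IsLeftAdjoint

/-- `Ext²(V, A) = 0` (Yoneda `Ext²`): every `2`-fold extension
`0 → A —g→ X₁ —f→ X₀ —p→ V → 0` represents the trivial class, i.e. (by the standard
long-exact-sequence criterion) the extension `0 → A → X₁ → im f → 0` extends to an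
extension of `X₀` by `A`. -/
def Ext2Zero (V A : C) : Prop :=
  ∀ (X1 X0 : C) (g : A ⟶ X1) (f : X1 ⟶ X0) (p : X0 ⟶ V)
    (w1 : g ≫ f = 0) (w2 : f ≫ p = 0),
    Mono g → Epi p → (ShortComplex.mk g f w1).Exact → (ShortComplex.mk f p w2).Exact →
    ∃ (Y : C) (a : A ⟶ Y) (b : Y ⟶ X0), IsShortExact a b ∧
      ∃ φ : X1 ⟶ Y, g ≫ φ = a ∧ φ ≫ b = f

/-- `V` has projective dimension at most `1`: `Ext²(V, A) = 0` for every `A`. -/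
def ProjDimLE1 (V : C) : Prop := ∀ A : C, Ext2Zero V A

/-- The "elements" of the (possibly large) Yoneda `Ext¹(X, Y)`: short exact sequences
`0 → Y → E → X → 0`. -/
def ExtElem (X Y : C) : Type (max u v) :=
  Σ' (E : C) (i : Y ⟶ E) (p : E ⟶ X), IsShortExact i p

/-- Yoneda equivalence of extensions. -/
def extRel (X Y : C) : ExtElem X Y → ExtElem X Y → Prop :=
  fun e₁ e₂ => ∃ φ : e₁.1 ⟶ e₂.1, e₁.2.1 ≫ φ = e₂.2.1 ∧ φ ≫ e₂.2.2.1 = e₁.2.2.1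

/-- The (possibly large) Yoneda `Ext¹(X, Y)`, as the quotient of the collection
of extensions by Yoneda equivalence. -/
def ExtClass (X Y : C) : Type (max u v) := Quot (extRel X Y)

/-- `Ext¹(A, B)` is a finitely generated (right) `End(A)`-module: there are `n : ℕ` and a
short exact sequence `0 → B → X → A^n → 0` whose connecting map
`Hom(A, A^n) → Ext¹(A, B)` is surjective, i.e. every extension of `A` by `B` is a pullback
of the fixed one along some `h : A ⟶ A^n`. -/
def Ext1FGEnd (A B : C) : Prop :=
  ∃ (n : ℕ) (X : C) (u : B ⟶ X) (p : X ⟶ ⨁ (fun _ : Fin n => A)),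
    IsShortExact u p ∧
    ∀ (E : C) (i : B ⟶ E) (q : E ⟶ A), IsShortExact i q →
      ∃ (h : A ⟶ ⨁ (fun _ : Fin n => A)) (φ : E ⟶ X), i ≫ φ = u ∧ φ ≫ p = q ≫ h

/-- `∐¹_I f = 0`: for every `I`-indexed family of short exact sequences
`0 → Xᵢ → Yᵢ → fᵢ → 0`, the induced morphism `∐ Xᵢ → ∐ Yᵢ` between (existing)
coproducts is a monomorphism. -/
def CoprodDerivedZeroFam {I : Type v} (f : I → C) : Prop :=
  ∀ (X Y : I → C) (u : ∀ i, X i ⟶ Y i) (p : ∀ i, Y i ⟶ f i),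
    (∀ i, IsShortExact (u i) (p i)) →
    ∀ (QX QY : C) (ιX : ∀ i, X i ⟶ QX) (ιY : ∀ i, Y i ⟶ QY) (uu : QX ⟶ QY),
      IsCoproductIn Set.univ X QX ιX → IsCoproductIn Set.univ Y QY ιY →
      (∀ i, ιX i ≫ uu = u i ≫ ιY i) → Mono uu

/-- `∐¹_I V = 0` for the constant family at `V`. -/
def CoprodDerivedZero (I : Type v) (V : C) : Prop :=
  CoprodDerivedZeroFam (fun _ : I => V)

/-- Witness that the category `D` is `Hom`-finite: a commutative ring `R` together with an
`R`-linear structure on `D` for which all `Hom`-modules are finitely generated. -/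
structure HomFiniteStruct (D : Type u) [Category.{v} D] [Preadditive D] :
    Type (max u (v + 1)) where
  R : Type v
  [commRing : CommRing R]
  [linear : CategoryTheory.Linear R D]
  homFinite : ∀ A B : D, Module.Finite R (A ⟶ B)

/-- The category `D` is `Hom`-finite. -/
def HomFinite (D : Type u) [Category.{v} D] [Preadditive D] : Prop :=
  Nonempty (HomFiniteStruct D)

/-- `Q`, with injections `ι`, is a coproduct of the family `f` in an arbitrary category. -/
def IsCoproductCocone {D : Type u} [Category.{v} D] {I : Type w} (f : I → D) (Q : D)
    (ι : ∀ i, f i ⟶ Q) : Prop :=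
  ∀ (Z : D) (g : ∀ i, f i ⟶ Z), ∃! h : Q ⟶ Z, ∀ i, ι i ≫ h = g i

/-- The category `D` satisfies (Ab.4): it has all (small) coproducts, and coproducts
of monomorphisms are monomorphisms (for abelian categories, the latter is equivalent to
the exactness of coproducts). -/
def Ab4Type (D : Type u) [Category.{v} D] : Prop :=
  HasCoproducts.{v} D ∧
  ∀ (I : Type v) (X Y : I → D) (u : ∀ i, X i ⟶ Y i), (∀ i, Mono (u i)) →
    ∀ (QX QY : D) (ιX : ∀ i, X i ⟶ QX) (ιY : ∀ i, Y i ⟶ QY) (uu : QX ⟶ QY),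
      IsCoproductCocone X QX ιX → IsCoproductCocone Y QY ιY →
      (∀ i, ιX i ≫ uu = u i ≫ ιY i) → Mono uu

/-- The category `D` satisfies (Ab.5): it has all (small) coproducts and directed
(filtered) colimits of monomorphisms are monomorphisms (for abelian categories the
latter is equivalent to the exactness of directed colimits). -/
def Ab5Type (D : Type u) [Category.{v} D] : Prop :=
  HasCoproducts.{v} D ∧
  ∀ (J : Type v) [SmallCategory J] [IsFiltered J] (F G : J ⥤ D) (α : F ⟶ G),
    (∀ j, Mono (α.app j)) →
    ∀ (cF : Cocone F) (cG : Cocone G), IsColimit cF → IsColimit cG →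
      ∀ m : cF.pt ⟶ cG.pt, (∀ j, cF.ι.app j ≫ m = α.app j ≫ cG.ι.app j) → Mono m

/-- A ring `S` is left coherent: every finitely generated left ideal is finitely
presented as a left `S`-module. -/
def LeftCoherentRing (S : Type u) [Ring S] : Prop :=
  ∀ J : Submodule S S, J.FG → Module.FinitePresentation S J

/-- A ring `S` is right coherent: every finitely generated right ideal (i.e. finitely
generated left ideal of `Sᵐᵒᵖ`) is finitely presented as a right `S`-module. -/
def RightCoherentRing (S : Type u) [Ring S] : Prop :=
  ∀ J : Submodule Sᵐᵒᵖ Sᵐᵒᵖ, J.FG → Module.FinitePresentation Sᵐᵒᵖ J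

end Paper

/-!
STATEMENT 8 (Lemma `tilt_implies_ext_univ_lemma`).
-/

namespace Stmt8

open Paper CategoryTheory CategoryTheory.Limits

variable {C : Type u} [Category.{v} C] [Abelian C]

/-! ### Auxiliary lemmas -/

/-- Pulling back a short exact sequence along an arbitrary morphism. -/
private lemma pullback_ses {K Y Q Z : C} {k : K ⟶ Y} {c : Y ⟶ Q} (h : IsShortExact k c)
    (t : Z ⟶ Q) :
    ∃ u : K ⟶ pullback c t, u ≫ pullback.fst c t = k ∧ u ≫ pullback.snd c t = 0 ∧
      IsShortExact u (pullback.snd c t) := by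
  obtain ⟨hw, hse⟩ := h
  haveI : Mono k := hse.mono_f
  haveI : Epi c := hse.epi_g
  have hcomp : k ≫ c = (0 : K ⟶ Z) ≫ t := by rw [hw, zero_comp]
  have h1 : pullback.lift k 0 hcomp ≫ pullback.fst c t = k := pullback.lift_fst _ _ _
  have h2 : pullback.lift k 0 hcomp ≫ pullback.snd c t = 0 := pullback.lift_snd _ _ _
  haveI : Mono (pullback.lift k 0 hcomp) := mono_of_mono_fac h1
  have hker : IsLimit (KernelFork.ofι (pullback.lift k 0 hcomp) h2) := by
    apply KernelFork.IsLimit.ofι'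
    intro Z' w hwz
    have hw1 : (w ≫ pullback.fst c t) ≫ c = 0 := by
      rw [Category.assoc, pullback.condition, ← Category.assoc, hwz, zero_comp]
    refine ⟨hse.exact.lift (w ≫ pullback.fst c t) hw1, ?_⟩
    apply pullback.hom_ext
    · rw [Category.assoc, h1]
      exact hse.exact.lift_f _ _
    · rw [Category.assoc, h2, comp_zero, hwz]
  exact ⟨pullback.lift k 0 hcomp, h1, h2, h2, ShortComplex.ShortExact.mk'
    ((ShortComplex.mk _ _ h2).exact_of_f_is_kernel hker) inferInstance inferInstance⟩

/-- Pushing out a short exact sequence along an arbitrary morphism. -/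
private lemma pushout_ses {A E B P : C} {i : A ⟶ E} {q : E ⟶ B} (h : IsShortExact i q)
    (p : A ⟶ P) :
    ∃ q' : pushout i p ⟶ B, pushout.inl i p ≫ q' = q ∧ pushout.inr i p ≫ q' = 0 ∧
      IsShortExact (pushout.inr i p) q' := by
  obtain ⟨hw, hse⟩ := h
  haveI : Mono i := hse.mono_f
  haveI : Epi q := hse.epi_g
  have hcomp : i ≫ q = p ≫ (0 : P ⟶ B) := by rw [hw, comp_zero]
  have h1 : pushout.inl i p ≫ pushout.desc q 0 hcomp = q := pushout.inl_desc _ _ _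
  have h2 : pushout.inr i p ≫ pushout.desc q 0 hcomp = 0 := pushout.inr_desc _ _ _
  haveI : Epi (pushout.desc q 0 hcomp) := epi_of_epi_fac h1
  have hcoker : IsColimit (CokernelCofork.ofπ (pushout.desc q 0 hcomp) h2) := by
    apply CokernelCofork.IsColimit.ofπ'
    intro Z' w hwz
    have hw1 : i ≫ (pushout.inl i p ≫ w) = 0 := by
      rw [← Category.assoc, pushout.condition, Category.assoc, hwz, comp_zero]
    refine ⟨hse.exact.desc (pushout.inl i p ≫ w) hw1, ?_⟩
    apply pushout.hom_ext
    · rw [← Category.assoc, h1]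
      exact hse.exact.g_desc _ _
    · rw [← Category.assoc, h2, zero_comp, hwz]
  exact ⟨pushout.desc q 0 hcomp, h1, h2, h2, ShortComplex.ShortExact.mk'
    ((ShortComplex.mk _ _ h2).exact_of_g_is_cokernel hcoker) inferInstance inferInstance⟩

/-- Given a short exact sequence `0 → A → X → P → 0` and a monomorphism `i : X ⟶ E`,
the sequence `0 → A → E → pushout i p → 0` (with `pushout.inl`) is short exact. -/
private lemma pushout_inl_ses {A X E P : C} {u : A ⟶ X} {p : X ⟶ P} (hup : IsShortExact u p)
    (i : X ⟶ E) [Mono i] : IsShortExact (u ≫ i) (pushout.inl i p) := by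
  obtain ⟨hw, hse⟩ := hup
  haveI : Mono u := hse.mono_f
  haveI : Epi p := hse.epi_g
  have hw0 : (u ≫ i) ≫ pushout.inl i p = 0 := by
    rw [Category.assoc, pushout.condition, ← Category.assoc, hw, zero_comp]
  haveI : Epi (pushout.inl i p) := by
    constructor
    intro Z a b hab
    apply pushout.hom_ext
    · exact hab
    · have h := congrArg (fun z => i ≫ z) hab
      simp only [← Category.assoc, pushout.condition] at h
      rw [Category.assoc, Category.assoc] at h
      exact (cancel_epi p).1 h
  haveI : Mono (u ≫ i) := mono_comp u i
  haveI : Mono (biprod.lift i (-p)) := mono_of_mono_fac (biprod.lift_fst i (-p))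
  have hkerlim := Abelian.monoIsKernelOfCokernel _
    (Abelian.BiproductToPushoutIsCokernel.isColimitBiproductToPushout i p)
  have hker : IsLimit (KernelFork.ofι (u ≫ i) hw0) := by
    apply KernelFork.IsLimit.ofι'
    intro Z w hwz
    have hu0 : biprod.lift w (0 : Z ⟶ P) ≫
        Abelian.BiproductToPushoutIsCokernel.biproductToPushout i p = 0 := by
      rw [biprod.lift_desc, hwz, zero_comp, add_zero]
    obtain ⟨d, hd⟩ := KernelFork.IsLimit.lift' hkerlim _ hu0
    rw [Fork.ι_ofι] at hd
    have hdi : d ≫ i = w := by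
      have h := congrArg (fun z => z ≫ biprod.fst) hd
      simpa using h
    have hdp : d ≫ p = 0 := by
      have h := congrArg (fun z => z ≫ biprod.snd) hd
      simp only [Category.assoc, biprod.lift_snd, Preadditive.comp_neg, neg_eq_zero] at h
      exact h
    refine ⟨hse.exact.lift d hdp, ?_⟩
    rw [← Category.assoc, hse.exact.lift_f, hdi]
  exact ⟨hw0, ShortComplex.ShortExact.mk'
    ((ShortComplex.mk _ _ hw0).exact_of_f_is_kernel hker) inferInstance inferInstance⟩

/-- A retraction of the left map of a short exact sequence yields a section of the right map. -/
private lemma exists_section_of_retraction {A E B : C} {i : A ⟶ E} {p : E ⟶ B}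
    (h : IsShortExact i p) {r : E ⟶ A} (hr : i ≫ r = 𝟙 A) : ∃ s : B ⟶ E, s ≫ p = 𝟙 B := by
  obtain ⟨hw, hse⟩ := h
  exact ⟨(ShortComplex.Splitting.ofExactOfRetraction (ShortComplex.mk i p hw) hse.exact r hr
      hse.epi_g).s,
    (ShortComplex.Splitting.ofExactOfRetraction (ShortComplex.mk i p hw) hse.exact r hr
      hse.epi_g).s_g⟩

/-- A section of the right map of a short exact sequence yields a retraction of the left map. -/
private lemma exists_retraction_of_section {A E B : C} {i : A ⟶ E} {p : E ⟶ B}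
    (h : IsShortExact i p) {s : B ⟶ E} (hs : s ≫ p = 𝟙 B) : ∃ r : E ⟶ A, i ≫ r = 𝟙 A := by
  obtain ⟨hw, hse⟩ := h
  exact ⟨(ShortComplex.Splitting.ofExactOfSection (ShortComplex.mk i p hw) hse.exact s hs
      hse.mono_f).r,
    (ShortComplex.Splitting.ofExactOfSection (ShortComplex.mk i p hw) hse.exact s hs
      hse.mono_f).f_r⟩

/-- Extending a coproduct of copies of `V` by one more copy of `V`, using binary biproducts. -/
private lemma coprod_option (V : C) {I0 : Type v} {W : C} (κ : ∀ _ : I0, V ⟶ W)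
    (hcop : IsCoproductIn (Set.univ : Set C) (fun _ : I0 => V) W κ) :
    IsCoproductIn (Set.univ : Set C) (fun _ : Option I0 => V) (W ⊞ V)
      (fun j => Option.elim j biprod.inr (fun i0 => κ i0 ≫ biprod.inl)) := by
  refine ⟨fun _ => Set.mem_univ _, Set.mem_univ _, ?_⟩
  intro Z _ g
  obtain ⟨h, hh, hhu⟩ := hcop.desc Z (Set.mem_univ _) fun i0 => g (some i0)
  refine ⟨biprod.desc h (g none), ?_, ?_⟩
  · intro j
    cases j with
    | none => exact biprod.inr_desc _ _
    | some i0 =>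
      show (κ i0 ≫ biprod.inl) ≫ biprod.desc h (g none) = g (some i0)
      rw [Category.assoc, biprod.inl_desc]
      exact hh i0
  · intro H2 hH2
    have h1 : biprod.inl ≫ H2 = h := hhu _ fun i0 => by
      rw [← Category.assoc]; exact hH2 (some i0)
    have h2 : biprod.inr ≫ H2 = g none := hH2 none
    apply biprod.hom_ext'
    · rw [biprod.inl_desc, h1]
    · rw [biprod.inr_desc, h2]

/-- The core construction of universal extensions: given a mono `m : A ⟶ T` with `T ∈ V^⊥`,
cokernel sequence `0 → A → T → C0 → 0`, an epi `c : P0 ⟶ C0` whose kernel is in `V^⊥`, and a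
factorization `σ ≫ π = c`, the pullback of `e` along `π` gives a universal extension of `V`
by `A`. -/
private lemma exists_universal_extension_aux (V : C) {T A C0 : C} (m : A ⟶ T) (e : T ⟶ C0)
    (hme : IsShortExact m e) (hTperp : Ext1ZeroIn Set.univ V T)
    {P0 : C} (c : P0 ⟶ C0) (hc : Epi c) (hKperp : Ext1ZeroIn Set.univ V (kernel c))
    {W' : C} (π : W' ⟶ C0) (σ : P0 ⟶ W') (hσπ : σ ≫ π = c) :
    ∃ u : A ⟶ pullback e π, IsShortExact u (pullback.snd e π) ∧
      ∀ E, ∀ (i : A ⟶ E) (q : E ⟶ V), IsShortExact i q →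
        ∃ ψ : E ⟶ pullback e π, i ≫ ψ = u := by
  obtain ⟨u, hufst, husnd, huse⟩ := pullback_ses hme π
  refine ⟨u, huse, ?_⟩
  intro E i q hiq
  obtain ⟨hw, hse⟩ := id hme
  haveI : Mono m := hse.mono_f
  obtain ⟨qG, hqG1, hqG2, hqG3⟩ := pushout_ses hiq m
  obtain ⟨ρ, hρ⟩ := hTperp (pushout i m) (Set.mem_univ _) (pushout.inr i m) qG hqG3
  have hiψ : i ≫ (pushout.inl i m ≫ ρ) = m := by
    rw [← Category.assoc, pushout.condition, Category.assoc, hρ, Category.comp_id]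
  obtain ⟨hwiq, hseiq⟩ := id hiq
  haveI := hseiq.epi_g
  haveI := hseiq.mono_f
  have h0 : i ≫ ((pushout.inl i m ≫ ρ) ≫ e) = 0 := by
    rw [← Category.assoc, hiψ, hw]
  have ht : q ≫ hseiq.exact.desc ((pushout.inl i m ≫ ρ) ≫ e) h0
      = (pushout.inl i m ≫ ρ) ≫ e := hseiq.exact.g_desc _ _
  set t := hseiq.exact.desc ((pushout.inl i m ≫ ρ) ≫ e) h0 with htdef
  have hkc : IsShortExact (kernel.ι c) c :=
    ⟨kernel.condition c, ShortComplex.ShortExact.mk'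
      ((ShortComplex.mk _ _ (kernel.condition c)).exact_of_f_is_kernel (kernelIsKernel c))
      inferInstance hc⟩
  obtain ⟨g', hg'1, hg'2, hg'3⟩ := pullback_ses hkc t
  obtain ⟨r', hr'⟩ := hKperp (pullback c t) (Set.mem_univ _) g' (pullback.snd c t) hg'3
  obtain ⟨s', hs'⟩ := exists_section_of_retraction hg'3 hr'
  have hstep : (s' ≫ pullback.fst c t) ≫ c = t := by
    rw [Category.assoc, pullback.condition, ← Category.assoc, hs', Category.id_comp]
  have hlt : ((s' ≫ pullback.fst c t) ≫ σ) ≫ π = t := by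
    rw [Category.assoc (s' ≫ pullback.fst c t) σ π, hσπ, hstep]
  have hlift : (pushout.inl i m ≫ ρ) ≫ e = (q ≫ ((s' ≫ pullback.fst c t) ≫ σ)) ≫ π := by
    rw [Category.assoc q, hlt, ht]
  refine ⟨pullback.lift (pushout.inl i m ≫ ρ) (q ≫ ((s' ≫ pullback.fst c t) ≫ σ)) hlift, ?_⟩
  apply pullback.hom_ext
  · rw [Category.assoc, pullback.lift_fst, hiψ, hufst]
  · rw [Category.assoc, pullback.lift_snd, husnd, ← Category.assoc, hwiq, zero_comp]


theorem statement8 (V : C) (hV : IsTiltingIn (Set.univ : Set C) V) :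
    -- `V` is `Ext¹`-universal
    IsExt1UniversalIn Set.univ V ∧
    -- `V^{⊥₁} = Gen(V)`
    rightPerp Set.univ V = genIn Set.univ V ∧
    -- the middle term of any universal extension of `V` lies in `V^{⊥₁}`
    (∀ (A X : C) (u : A ⟶ X), IsUniversalExtensionIn Set.univ V A X u →
      X ∈ rightPerp Set.univ V) := by
  obtain ⟨⟨hVmem, htc, hgenpres, hgenint⟩, hcogen⟩ := hV
  have hgenperp : ∀ A : C, A ∈ genIn (Set.univ : Set C) V → Ext1ZeroIn Set.univ V A := by
    intro A hA
    rw [hgenint] at hA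
    exact hA.2.2
  have hperp_eq : rightPerp (Set.univ : Set C) V = genIn Set.univ V := by
    apply Set.Subset.antisymm
    · intro A hA
      rw [hgenint]
      obtain ⟨T, hT, f, hf⟩ := hcogen A (Set.mem_univ A)
      exact ⟨⟨Set.mem_univ A, T, hT, f, hf⟩, hA⟩
    · intro A hA
      exact ⟨Set.mem_univ _, hgenperp A hA⟩
  refine ⟨?_, hperp_eq, ?_⟩
  · -- `V` is `Ext¹`-universal
    intro A _
    obtain ⟨T, hT, m, hm⟩ := hcogen A (Set.mem_univ A)
    haveI := hm
    have hme : IsShortExact m (cokernel.π m) := ⟨cokernel.condition m,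
      ShortComplex.ShortExact.mk'
        ((ShortComplex.mk _ _ (cokernel.condition m)).exact_of_g_is_cokernel
          (cokernelIsCokernel m)) hm inferInstance⟩
    have hC0 : cokernel m ∈ presIn (Set.univ : Set C) V := by
      rw [← hgenpres]
      obtain ⟨-, Q, hQ, pq, hpq⟩ := id hT
      haveI := hpq
      exact ⟨Set.mem_univ _, Q, hQ, pq ≫ cokernel.π m, epi_comp _ _⟩
    obtain ⟨-, P1, hP1, P0, hP0, f, c, hwfc, hc, hexact⟩ := hC0
    haveI := hc
    have hKperp : Ext1ZeroIn Set.univ V (kernel c) := by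
      apply hgenperp
      exact ⟨Set.mem_univ _, P1, hP1, kernel.lift c f hwfc,
        (ShortComplex.exact_iff_epi_kernel_lift _).1 hexact⟩
    obtain ⟨-, I0, W, κ, hcop, sec, ret, hsr⟩ := id hP0
    haveI : Epi ret := epi_of_epi_fac hsr
    have hσπ : (sec ≫ biprod.inl) ≫ biprod.desc (ret ≫ c) (0 : V ⟶ cokernel m) = c := by
      rw [Category.assoc, biprod.inl_desc, ← Category.assoc, hsr, Category.id_comp]
    obtain ⟨u, huse, huniv⟩ := exists_universal_extension_aux V m (cokernel.π m) hme
      (hgenperp T hT) c hc hKperp (biprod.desc (ret ≫ c) 0) (sec ≫ biprod.inl) hσπ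
    exact ⟨pullback (cokernel.π m) (biprod.desc (ret ≫ c) 0), u, Set.mem_univ _, Set.mem_univ _,
      ⟨Option I0, ⟨none⟩, W ⊞ V, fun j => Option.elim j biprod.inr fun i0 => κ i0 ≫ biprod.inl,
        pullback.snd _ _, coprod_option V κ hcop, huse⟩,
      fun E _ i q hiq => huniv E i q hiq⟩
  · -- the middle term of any universal extension lies in `V^{⊥₁}`
    intro A X u hUE
    obtain ⟨-, -, ⟨J, hJ, P, κ, p, hcopP, hSESup⟩, huniv⟩ := hUE
    refine ⟨Set.mem_univ _, ?_⟩
    intro E _ i q hiq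
    have hPgen : P ∈ genIn (Set.univ : Set C) V :=
      ⟨Set.mem_univ _, P, ⟨Set.mem_univ _, J, P, κ, hcopP, 𝟙 P, 𝟙 P, Category.id_comp _⟩,
        𝟙 P, inferInstance⟩
    have hPperp := hgenperp P hPgen
    obtain ⟨hwiq, hseiq⟩ := id hiq
    haveI := hseiq.mono_f
    obtain ⟨q', hq'1, hq'2, hq'3⟩ := pushout_ses hiq p
    obtain ⟨ρ, hρ⟩ := hPperp (pushout i p) (Set.mem_univ _) (pushout.inr i p) q' hq'3
    obtain ⟨s, hs⟩ := exists_section_of_retraction hq'3 hρ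
    have hL3 := pushout_inl_ses hSESup i
    obtain ⟨g, hgfst, hgsnd, hgse⟩ := pullback_ses hL3 s
    obtain ⟨ψ, hψ⟩ := huniv (pullback (pushout.inl i p) s) (Set.mem_univ _) g
      (pullback.snd (pushout.inl i p) s) hgse
    obtain ⟨hwg, hseg⟩ := id hgse
    haveI := hseg.epi_g
    haveI := hseg.mono_f
    have hθ0 : g ≫ (pullback.fst (pushout.inl i p) s - ψ ≫ i) = 0 := by
      rw [Preadditive.comp_sub, hgfst, ← Category.assoc, hψ, sub_self]
    have ht : pullback.snd (pushout.inl i p) s ≫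
        hseg.exact.desc (pullback.fst (pushout.inl i p) s - ψ ≫ i) hθ0
        = pullback.fst (pushout.inl i p) s - ψ ≫ i := hseg.exact.g_desc _ _
    set t := hseg.exact.desc (pullback.fst (pushout.inl i p) s - ψ ≫ i) hθ0 with htdef
    have hfstq : pullback.fst (pushout.inl i p) s ≫ q = pullback.snd (pushout.inl i p) s := by
      rw [← hq'1, ← Category.assoc, pullback.condition, Category.assoc, hs, Category.comp_id]
    have htq : t ≫ q = 𝟙 V := by
      apply (cancel_epi (pullback.snd (pushout.inl i p) s)).1
      rw [← Category.assoc, ht, Preadditive.sub_comp, hfstq, Category.assoc, hwiq, comp_zero,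
        sub_zero, Category.comp_id]
    obtain ⟨r, hr⟩ := exists_retraction_of_section hiq htq
    exact ⟨r, hr⟩

end Stmt8
end

section
/- Let 𝒜 be an abelian category, V an object, and I a set such that the coproduct V^{(I)} exists in 𝒜. If there exists a cogenerating class 𝒳 ⊆ V^{⊥1} that is closed under taking quotients, then V^{(I)} has projective dimension ≤ 1, i.e. Ext^2_𝒜(V^{(I)}, A) = 0 for every object A. -/
/-!
Common definitions for formalizing results of "Tilting preenvelopes and cotilting
precovers in general Abelian categories" (Parra–Saorín–Virili).

Conventions:
* Full subcategories of an abelian category `C` are encoded as `Set C`.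
* "Sets" (index sets of families, coproducts, …) are encoded as types in the universe `v`
  of the morphisms of `C`.
* `Ext¹(X,Y) = 0` is encoded via the splitting of all short exact sequences
  `0 → Y → E → X → 0` (equivalently, the vanishing of the Yoneda Ext group).
* Relative (`…In B`) notions encode the corresponding notion computed inside the
  full (abelian exact) subcategory determined by `B : Set C`; the ambient case is
  `B = Set.univ`.
* Coproducts are not assumed to exist: a coproduct of a family existing in the
  (sub)category is encoded by a cocone with the universal property (`IsCoproductIn`).
-/

open CategoryTheory CategoryTheory.Limits

universe w v u

attribute [local instance] CategoryTheory.Abelian.hasFiniteBiproducts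

/-!
STATEMENT 11 (Corollary `coro_proj_dim`).
-/

namespace Stmt11

open Paper CategoryTheory CategoryTheory.Limits

variable {C : Type u} [Category.{v} C] [Abelian C]

/-- From a short exact sequence and a retraction of `i`, obtain a section of `p`. -/
lemma section_of_retraction {A E B : C} {i : A ⟶ E} {p : E ⟶ B} (w : i ≫ p = 0)
    (hSE : (ShortComplex.mk i p w).ShortExact) {r : E ⟶ A} (hr : i ≫ r = 𝟙 A) :
    ∃ s : B ⟶ E, s ≫ p = 𝟙 B := by
  have he : Epi p := hSE.epi_g
  obtain ⟨s, hs⟩ := CokernelCofork.IsColimit.desc' hSE.gIsCokernel (𝟙 E - r ≫ i)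
    (by
      simp only [Preadditive.comp_sub, Category.comp_id, ← Category.assoc, hr,
        Category.id_comp, sub_self])
  simp only [Cofork.π_ofπ] at hs
  refine ⟨s, ?_⟩
  have : p ≫ s ≫ p = p ≫ 𝟙 B := by
    rw [← Category.assoc, hs, Preadditive.sub_comp, Category.id_comp, Category.comp_id,
      Category.assoc, w, comp_zero, sub_zero]
  exact (cancel_epi p).1 this

/-- From a short exact sequence and a section of `p`, obtain a retraction of `i`. -/
lemma retraction_of_section {A E B : C} {i : A ⟶ E} {p : E ⟶ B} (w : i ≫ p = 0)
    (hSE : (ShortComplex.mk i p w).ShortExact) {s : B ⟶ E} (hs : s ≫ p = 𝟙 B) :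
    ∃ r : E ⟶ A, i ≫ r = 𝟙 A := by
  have hm : Mono i := hSE.mono_f
  obtain ⟨r, hr⟩ := KernelFork.IsLimit.lift' hSE.fIsKernel (𝟙 E - p ≫ s)
    (by
      simp only [Preadditive.sub_comp, Category.id_comp, Category.assoc, hs,
        Category.comp_id, sub_self])
  simp only [Fork.ι_ofι] at hr
  refine ⟨r, ?_⟩
  have : (i ≫ r) ≫ i = 𝟙 A ≫ i := by
    rw [Category.assoc, hr, Preadditive.comp_sub, Category.comp_id, Category.id_comp,
      ← Category.assoc, w, zero_comp, sub_zero]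
  exact (cancel_mono i).1 this

/-- Pulling back a short exact sequence along a morphism gives a short exact sequence. -/
lemma pullback_isShortExact {A E B B' : C} {i : A ⟶ E} {p : E ⟶ B}
    (w : i ≫ p = 0) (hSE : (ShortComplex.mk i p w).ShortExact) (t : B' ⟶ B) :
    IsShortExact (pullback.lift i 0 (by rw [w, zero_comp]) : A ⟶ pullback p t)
      (pullback.snd p t) := by
  have hm : Mono i := hSE.mono_f
  have he : Epi p := hSE.epi_g
  set l : A ⟶ pullback p t := pullback.lift i 0 (by rw [w, zero_comp]) with hl_def
  have hlf : l ≫ pullback.fst p t = i := pullback.lift_fst _ _ _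
  have hls : l ≫ pullback.snd p t = 0 := pullback.lift_snd _ _ _
  have hmono : Mono l := by
    have : Mono (l ≫ pullback.fst p t) := by rw [hlf]; infer_instance
    exact mono_of_mono l (pullback.fst p t)
  have hepi : Epi (pullback.snd p t) := inferInstance
  refine ⟨hls, ShortComplex.ShortExact.mk' ?_ hmono hepi⟩
  apply ShortComplex.exact_of_f_is_kernel
  refine KernelFork.IsLimit.ofι' _ _ (fun {W} z hz => ?_)
  have hz' : (z ≫ pullback.fst p t) ≫ p = 0 := by
    rw [Category.assoc, pullback.condition, ← Category.assoc, hz, zero_comp]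
  obtain ⟨u, hu⟩ := KernelFork.IsLimit.lift' hSE.fIsKernel _ hz'
  simp only [Fork.ι_ofι] at hu
  refine ⟨u, ?_⟩
  apply pullback.hom_ext
  · rw [Category.assoc, hlf, hu]
  · rw [Category.assoc, hls, comp_zero, hz]

/-- Pushing out a short exact sequence along a morphism gives a short exact sequence. -/
lemma pushout_isShortExact {A E B A' : C} {i : A ⟶ E} {p : E ⟶ B}
    (w : i ≫ p = 0) (hSE : (ShortComplex.mk i p w).ShortExact) (t : A ⟶ A') :
    IsShortExact (pushout.inl t i)
      (pushout.desc 0 p (by rw [comp_zero, w]) : pushout t i ⟶ B) := by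
  have hm : Mono i := hSE.mono_f
  have he : Epi p := hSE.epi_g
  set d : pushout t i ⟶ B := pushout.desc 0 p (by rw [comp_zero, w]) with hd_def
  have hld : pushout.inl t i ≫ d = 0 := pushout.inl_desc _ _ _
  have hrd : pushout.inr t i ≫ d = p := pushout.inr_desc _ _ _
  have hmono : Mono (pushout.inl t i) := inferInstance
  have hepi : Epi d := by
    have : Epi (pushout.inr t i ≫ d) := by rw [hrd]; exact he
    exact epi_of_epi (pushout.inr t i) d
  refine ⟨hld, ShortComplex.ShortExact.mk' ?_ hmono hepi⟩
  apply ShortComplex.exact_of_g_is_cokernel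
  refine CokernelCofork.IsColimit.ofπ' _ _ (fun {W} z hz => ?_)
  have hz' : i ≫ pushout.inr t i ≫ z = 0 := by
    rw [← Category.assoc, ← pushout.condition, Category.assoc, hz, comp_zero]
  obtain ⟨u, hu⟩ := CokernelCofork.IsColimit.desc' hSE.gIsCokernel _ hz'
  simp only [Cofork.π_ofπ] at hu
  refine ⟨u, ?_⟩
  apply pushout.hom_ext
  · rw [← Category.assoc, hld, zero_comp, hz]
  · rw [← Category.assoc, hrd, hu]

/-- Any short exact sequence `0 → Y → E → Q → 0` with `Ext¹(V, Y) = 0` and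
`Q` a coproduct of copies of `V` splits. -/
lemma split_of_coproduct {V Q : C} {I : Type v} {ι : ∀ _ : I, V ⟶ Q}
    (hQ : IsCoproductIn Set.univ (fun _ : I => V) Q ι)
    {Y E : C} (hY : Ext1ZeroIn Set.univ V Y)
    {i : Y ⟶ E} {p : E ⟶ Q} (w : i ≫ p = 0)
    (hSE : (ShortComplex.mk i p w).ShortExact) :
    ∃ r : E ⟶ Y, i ≫ r = 𝟙 Y := by
  have hsec : ∀ i0 : I, ∃ s0 : V ⟶ E, s0 ≫ p = ι i0 := by
    intro i0
    obtain ⟨w', hSE'⟩ := pullback_isShortExact w hSE (ι i0)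
    obtain ⟨r, hr⟩ := hY (pullback p (ι i0)) (Set.mem_univ _) _ _ ⟨w', hSE'⟩
    obtain ⟨σ, hσ⟩ := section_of_retraction w' hSE' hr
    exact ⟨σ ≫ pullback.fst p (ι i0), by
      rw [Category.assoc, pullback.condition, ← Category.assoc, hσ, Category.id_comp]⟩
  choose s0 hs0 using hsec
  obtain ⟨s, hs, -⟩ := hQ.desc E (Set.mem_univ _) s0
  have hsp : s ≫ p = 𝟙 Q := by
    obtain ⟨h, -, huniq⟩ := hQ.desc Q (Set.mem_univ _) ι
    have h1 : s ≫ p = h := huniq _ (fun i0 => by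
      rw [← Category.assoc, hs, hs0])
    have h2 : 𝟙 Q = h := huniq _ (fun i0 => by rw [Category.comp_id])
    rw [h1, ← h2]
  exact retraction_of_section w hSE hsp

/-- If `Ext¹(V, Y) = 0` and `0 → K → X₀ → Q → 0` is exact with `Q` a coproduct of
copies of `V`, then every morphism `K ⟶ Y` extends to `X₀`. -/
lemma extend_along {V Q : C} {I : Type v} {ι : ∀ _ : I, V ⟶ Q}
    (hQ : IsCoproductIn Set.univ (fun _ : I => V) Q ι)
    {K X₀ Y : C} (hY : Ext1ZeroIn Set.univ V Y)
    {m : K ⟶ X₀} {p : X₀ ⟶ Q} (w : m ≫ p = 0)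
    (hSE : (ShortComplex.mk m p w).ShortExact)
    (k : K ⟶ Y) : ∃ kt : X₀ ⟶ Y, m ≫ kt = k := by
  obtain ⟨w', hSE'⟩ := pushout_isShortExact w hSE k
  obtain ⟨r, hr⟩ := split_of_coproduct hQ hY w' hSE'
  refine ⟨pushout.inr k m ≫ r, ?_⟩
  rw [← Category.assoc, ← pushout.condition, Category.assoc, hr, Category.comp_id]

theorem statement11 (V : C) (I : Type v) (Q : C) (ι : ∀ _ : I, V ⟶ Q)
    (hQ : IsCoproductIn Set.univ (fun _ : I => V) Q ι)
    (X : Set C)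
    -- `𝒳 ⊆ V^{⊥₁}`:
    (hsub : X ⊆ rightPerp Set.univ V)
    -- `𝒳` is cogenerating:
    (hcog : CogeneratingIn Set.univ X)
    -- `𝒳` is closed under quotients:
    (hquot : ∀ ⦃A B : C⦄, A ∈ X → ∀ p : A ⟶ B, Epi p → B ∈ X) :
    -- `pd (V^{(I)}) ≤ 1`, i.e. `Ext²(V^{(I)}, A) = 0` for every `A`:
    ∀ A : C, Ext2Zero Q A := by
  intro A X1 X0 g f p w1 w2 hg hp hex1 hex2
  haveI := hg
  haveI := hp
  -- `K` is the image of `f`, realized as the cokernel of `g`.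
  set K := cokernel g with hK_def
  set π : X1 ⟶ K := cokernel.π g with hπ_def
  set m : K ⟶ X0 := cokernel.desc g f w1 with hm_def
  have hπm : π ≫ m = f := cokernel.π_desc g f w1
  haveI hmono_m : Mono m := by
    rw [ShortComplex.exact_iff_mono_cokernel_desc] at hex1
    exact hex1
  have hmp : m ≫ p = 0 := by
    have : π ≫ m ≫ p = π ≫ 0 := by
      rw [comp_zero, ← Category.assoc, hπm]; exact w2
    exact (cancel_epi π).1 this
  -- `0 → K → X0 → Q → 0` is short exact.
  have hexmp : (ShortComplex.mk m p hmp).Exact := by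
    let φ : ShortComplex.mk f p w2 ⟶ ShortComplex.mk m p hmp :=
      { τ₁ := π, τ₂ := 𝟙 X0, τ₃ := 𝟙 Q,
        comm₁₂ := by simp [hπm], comm₂₃ := by simp }
    haveI : Epi φ.τ₁ := by show Epi π; infer_instance
    haveI : IsIso φ.τ₂ := by show IsIso (𝟙 X0); infer_instance
    haveI : Mono φ.τ₃ := by show Mono (𝟙 Q); infer_instance
    exact (ShortComplex.exact_iff_of_epi_of_isIso_of_mono φ).1 hex2
  have hSEmp : (ShortComplex.mk m p hmp).ShortExact :=
    ShortComplex.ShortExact.mk' hexmp hmono_m hp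
  -- Embed `X1` into an object of `𝒳`.
  obtain ⟨T₁, hT₁, j, hj⟩ := hcog X1 (Set.mem_univ _)
  haveI := hj
  haveI : Mono (g ≫ j) := mono_comp _ _
  set c : T₁ ⟶ cokernel (g ≫ j) := cokernel.π (g ≫ j) with hc_def
  have hT₂ : cokernel (g ≫ j) ∈ X := hquot hT₁ c inferInstance
  have hgjc : (g ≫ j) ≫ c = 0 := cokernel.condition _
  set k : K ⟶ cokernel (g ≫ j) :=
    cokernel.desc g (j ≫ c) (by rw [← Category.assoc]; exact hgjc) with hk_def
  have hπk : π ≫ k = j ≫ c := cokernel.π_desc _ _ _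
  -- Extend `k` along `m`, using `Ext¹(Q, T₂) = 0`.
  have hYext : Ext1ZeroIn Set.univ V (cokernel (g ≫ j)) := (hsub hT₂).2
  obtain ⟨kt, hkt⟩ := extend_along hQ hYext hmp hSEmp k
  -- The sought extension of `X0` by `A` is the pullback of `c` along `kt`.
  have hcomm : (g ≫ j) ≫ c = (0 : A ⟶ X0) ≫ kt := by rw [hgjc, zero_comp]
  set b : pullback c kt ⟶ X0 := pullback.snd c kt with hb_def
  set a : A ⟶ pullback c kt := pullback.lift (g ≫ j) 0 hcomm with ha_def
  have hGJ : (ShortComplex.mk (g ≫ j) c hgjc).ShortExact :=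
    ShortComplex.ShortExact.mk'
      (ShortComplex.exact_of_g_is_cokernel _ (cokernelIsCokernel (g ≫ j)))
      inferInstance inferInstance
  have hab : IsShortExact a b := pullback_isShortExact hgjc hGJ kt
  have hjf : j ≫ c = f ≫ kt := by
    rw [← hπm, Category.assoc, hkt, hπk]
  refine ⟨pullback c kt, a, b, hab, pullback.lift j f hjf, ?_, ?_⟩
  · apply pullback.hom_ext
    · rw [Category.assoc, pullback.lift_fst, pullback.lift_fst]
    · rw [Category.assoc, pullback.lift_snd, pullback.lift_snd, w1]
  · exact pullback.lift_snd _ _ _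

end Stmt11
end

section
/- Let 𝒜 be an abelian category, X an object, I a set such that I-indexed coproducts exist in 𝒜, and (V_i)_{i∈I} a family of objects such that ⨿^1_I V_i = 0. Then the canonical morphism Φ : Ext^1(⨿_{i∈I} V_i, X) → ∏_{i∈I} Ext^1(V_i, X) is an isomorphism of (possibly large) abelian groups. In particular, if V is any object with ⨿^1_I V = 0, then the canonical morphism Ext^1(V^{(I)}, X) → Ext^1(V, X)^I is an isomorphism. -/
/-!
Common definitions for formalizing results of "Tilting preenvelopes and cotilting
precovers in general Abelian categories" (Parra–Saorín–Virili).

Conventions: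
* Full subcategories of an abelian category `C` are encoded as `Set C`.
* "Sets" (index sets of families, coproducts, …) are encoded as types in the universe `v`
  of the morphisms of `C`.
* `Ext¹(X,Y) = 0` is encoded via the splitting of all short exact sequences
  `0 → Y → E → X → 0` (equivalently, the vanishing of the Yoneda Ext group).
* Relative (`…In B`) notions encode the corresponding notion computed inside the
  full (abelian exact) subcategory determined by `B : Set C`; the ambient case is
  `B = Set.univ`.
* Coproducts are not assumed to exist: a coproduct of a family existing in the
  (sub)category is encoded by a cocone with the universal property (`IsCoproductIn`).
-/

open CategoryTheory CategoryTheory.Limits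

universe w v u

attribute [local instance] CategoryTheory.Abelian.hasFiniteBiproducts

/-!
STATEMENT 12 (Proposition `prop.Ext-contrav-preserves-products`).
That the canonical map `Φ : Ext¹(∐ Vᵢ, X) → ∏ Ext¹(Vᵢ, X)` is an isomorphism is
encoded by:
* injectivity (trivial kernel): an extension of `∐ Vᵢ` by `X` whose pullbacks along all
  coproduct injections split is itself split; and
* surjectivity: every `I`-indexed family of extensions of the `Vᵢ` by `X` is, up to
  Yoneda equivalence, the family of pullbacks along the injections of a single
  extension of `∐ Vᵢ` by `X`.
-/

section
open Paper CategoryTheory CategoryTheory.Limits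
namespace Stmt12X

variable {C : Type u} [Category.{v} C] [Abelian C]

lemma hom_ext_of_isCoproductIn {I : Type v} {f : I → C} {Q : C} {ι : ∀ i, f i ⟶ Q}
    (hQ : IsCoproductIn Set.univ f Q ι) {Z : C} {a b : Q ⟶ Z}
    (h : ∀ i, ι i ≫ a = ι i ≫ b) : a = b := by
  obtain ⟨h₀, -, huniq⟩ := hQ.desc Z trivial (fun i => ι i ≫ a)
  rw [huniq a (fun i => rfl), huniq b (fun i => (h i).symm)]

lemma isCoproductIn_sigma {I : Type v} [HasColimitsOfShape (Discrete I) C] (g : I → C) :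
    IsCoproductIn Set.univ g (∐ g) (fun i => Sigma.ι g i) := by
  refine ⟨fun _ => trivial, trivial, fun Z _ h =>
    ⟨Sigma.desc h, fun i => Sigma.ι_desc _ _, fun y hy => ?_⟩⟩
  apply Sigma.hom_ext
  intro i
  simp [hy i]

lemma main (I : Type v) [HasColimitsOfShape (Discrete I) C]
    (f : I → C) (hf : CoprodDerivedZeroFam f)
    (Q : C) (ι : ∀ i, f i ⟶ Q) (hQ : IsCoproductIn Set.univ f Q ι) (X : C) :
    ((∀ (Y : C) (u : X ⟶ Y) (p : Y ⟶ Q), IsShortExact u p →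
        (∀ j, ∃ l : f j ⟶ Y, l ≫ p = ι j) → ∃ s : Q ⟶ Y, s ≫ p = 𝟙 Q) ∧
     (∀ (E : I → C) (i : ∀ j, X ⟶ E j) (q : ∀ j, E j ⟶ f j),
        (∀ j, IsShortExact (i j) (q j)) →
        ∃ (Y : C) (u : X ⟶ Y) (p : Y ⟶ Q), IsShortExact u p ∧
          ∀ j, ∃ φ : E j ⟶ Y, i j ≫ φ = u ∧ φ ≫ p = q j ≫ ι j)) := by
  constructor
  · -- injectivity
    intro Y u p _ hl
    choose l hl using hl
    obtain ⟨k, hk, -⟩ := hQ.desc (∐ f) trivial (fun j => Sigma.ι f j)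
    refine ⟨k ≫ Sigma.desc l, hom_ext_of_isCoproductIn hQ fun j => ?_⟩
    rw [Category.comp_id, ← Category.assoc, ← Category.assoc, hk, Sigma.ι_desc, hl]
  · -- surjectivity
    intro E i q hseq
    have hw : ∀ j, i j ≫ q j = 0 := fun j => (hseq j).choose
    have hse : ∀ j, (ShortComplex.mk (i j) (q j) (hw j)).ShortExact :=
      fun j => (hseq j).choose_spec
    -- the induced map between coproducts
    let uu : (∐ fun _ : I => X) ⟶ ∐ E := Sigma.desc (fun j => i j ≫ Sigma.ι E j)
    have huu : ∀ j, Sigma.ι (fun _ : I => X) j ≫ uu = i j ≫ Sigma.ι E j :=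
      fun j => Sigma.ι_desc _ _
    have huu_mono : Mono uu :=
      hf (fun _ => X) E i q hseq _ _ _ _ uu (isCoproductIn_sigma _)
        (isCoproductIn_sigma _) huu
    let σ : (∐ fun _ : I => X) ⟶ X := Sigma.desc (fun _ => 𝟙 X)
    let qq : (∐ E) ⟶ Q := Sigma.desc (fun j => q j ≫ ι j)
    have hqq : ∀ j, Sigma.ι E j ≫ qq = q j ≫ ι j := fun j => Sigma.ι_desc _ _
    have hcomp : uu ≫ qq = σ ≫ (0 : X ⟶ Q) := by
      apply Sigma.hom_ext; intro j
      rw [comp_zero, comp_zero, ← Category.assoc, huu j, Category.assoc, hqq j,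
        ← Category.assoc, hw j, zero_comp]
    -- qq is an epimorphism
    have hq_epi : ∀ j, Epi (q j) := fun j => (hse j).epi_g
    have hqq_epi : Epi qq := by
      refine ⟨fun {Z} a b hab => hom_ext_of_isCoproductIn hQ fun j => ?_⟩
      have : Sigma.ι E j ≫ qq ≫ a = Sigma.ι E j ≫ qq ≫ b := by rw [hab]
      rw [← Category.assoc, ← Category.assoc, hqq j, Category.assoc, Category.assoc] at this
      exact (cancel_epi (q j)).1 this
    -- the pushout
    let Y := pushout uu σ
    let u : X ⟶ Y := pushout.inr uu σ
    let p : Y ⟶ Q := pushout.desc qq 0 hcomp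
    have hlp : pushout.inl uu σ ≫ p = qq := pushout.inl_desc _ _ _
    have hup : u ≫ p = 0 := pushout.inr_desc _ _ _
    have hu_mono : Mono u := by
      haveI := huu_mono
      exact CategoryTheory.Abelian.mono_pushout_of_mono_f uu σ
    have hp_epi : Epi p := by
      have : Epi (pushout.inl uu σ ≫ p) := hlp ▸ hqq_epi
      exact epi_of_epi (pushout.inl uu σ) p
    -- qq is a (weak) cokernel of uu
    have hcoker : ∀ {Z : C} (t : (∐ E) ⟶ Z), uu ≫ t = 0 →
        ∃ w : Q ⟶ Z, qq ≫ w = t := by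
      intro Z t ht
      have h1 : ∀ j, i j ≫ (Sigma.ι E j ≫ t) = 0 := by
        intro j
        have := Sigma.ι (fun _ : I => X) j ≫= ht
        rw [← Category.assoc, huu j, comp_zero, Category.assoc] at this
        exact this
      let w0 : ∀ j, f j ⟶ Z := fun j =>
        Cofork.IsColimit.desc (hse j).gIsCokernel (Sigma.ι E j ≫ t) (by
          rw [zero_comp]; exact h1 j)
      have hw0 : ∀ j, q j ≫ w0 j = Sigma.ι E j ≫ t := fun j => by
        simpa using Cofork.IsColimit.π_desc' (hse j).gIsCokernel (Sigma.ι E j ≫ t)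
          (by rw [zero_comp]; exact h1 j)
      obtain ⟨w, hwfac, -⟩ := hQ.desc Z trivial w0
      refine ⟨w, Sigma.hom_ext _ _ fun j => ?_⟩
      rw [← Category.assoc, hqq j, Category.assoc, hwfac j, hw0 j]
    -- p is a cokernel of u
    have hpcoker : IsColimit (CokernelCofork.ofπ p hup) := by
      haveI := hp_epi
      refine CokernelCofork.IsColimit.ofπ' p hup (fun {A} t ht => ?_)
      have h2 : uu ≫ (pushout.inl uu σ ≫ t) = 0 := by
        rw [← Category.assoc, pushout.condition, Category.assoc]
        have hσε : σ ≫ pushout.inr uu σ ≫ t = σ ≫ 0 := by rw [ht]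
        rw [hσε, comp_zero]
      refine ⟨(hcoker _ h2).choose, ?_⟩
      have hwfac := (hcoker _ h2).choose_spec
      apply pushout.hom_ext
      · rw [← Category.assoc, hlp, hwfac]
      · rw [← Category.assoc, hup, zero_comp, ht]
    have hexact : (ShortComplex.mk u p hup).Exact :=
      ShortComplex.exact_of_g_is_cokernel _ hpcoker
    refine ⟨Y, u, p, ⟨hup, ?_⟩, fun j => ?_⟩
    · haveI := hu_mono; haveI := hp_epi
      exact ⟨hexact⟩
    · refine ⟨Sigma.ι E j ≫ pushout.inl uu σ, ?_, ?_⟩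
      · rw [← Category.assoc, ← huu j, Category.assoc, pushout.condition,
          ← Category.assoc]
        show (Sigma.ι (fun _ : I => X) j ≫ σ) ≫ pushout.inr uu σ = u
        rw [Sigma.ι_desc, Category.id_comp]
      · rw [Category.assoc, hlp, hqq j]

end Stmt12X
end

namespace Stmt12

open Paper CategoryTheory CategoryTheory.Limits

variable {C : Type u} [Category.{v} C] [Abelian C]

theorem statement12 (I : Type v) [HasColimitsOfShape (Discrete I) C]
    (f : I → C) (hf : CoprodDerivedZeroFam f)
    (Q : C) (ι : ∀ i, f i ⟶ Q) (hQ : IsCoproductIn Set.univ f Q ι) (X : C) :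
    -- Φ is injective:
    ((∀ (Y : C) (u : X ⟶ Y) (p : Y ⟶ Q), IsShortExact u p →
        (∀ j, ∃ l : f j ⟶ Y, l ≫ p = ι j) → ∃ s : Q ⟶ Y, s ≫ p = 𝟙 Q) ∧
     -- Φ is surjective:
     (∀ (E : I → C) (i : ∀ j, X ⟶ E j) (q : ∀ j, E j ⟶ f j),
        (∀ j, IsShortExact (i j) (q j)) →
        ∃ (Y : C) (u : X ⟶ Y) (p : Y ⟶ Q), IsShortExact u p ∧
          ∀ j, ∃ φ : E j ⟶ Y, i j ≫ φ = u ∧ φ ≫ p = q j ≫ ι j)) ∧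
    -- In particular, for a constant family at an object `V` with `∐¹_I V = 0`, the
    -- canonical map `Ext¹(V^{(I)}, X) → Ext¹(V, X)^I` is an isomorphism:
    (∀ (V : C), CoprodDerivedZero I V →
      ∀ (QV : C) (κ : ∀ _ : I, V ⟶ QV),
        IsCoproductIn Set.univ (fun _ : I => V) QV κ →
        ((∀ (Y : C) (u : X ⟶ Y) (p : Y ⟶ QV), IsShortExact u p →
            (∀ j : I, ∃ l : V ⟶ Y, l ≫ p = κ j) → ∃ s : QV ⟶ Y, s ≫ p = 𝟙 QV) ∧
         (∀ (E : I → C) (i : ∀ j, X ⟶ E j) (q : ∀ j, E j ⟶ V),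
            (∀ j, IsShortExact (i j) (q j)) →
            ∃ (Y : C) (u : X ⟶ Y) (p : Y ⟶ QV), IsShortExact u p ∧
              ∀ j, ∃ φ : E j ⟶ Y, i j ≫ φ = u ∧ φ ≫ p = q j ≫ κ j))) := by
  refine ⟨Stmt12X.main I f hf Q ι hQ X, fun V hV QV κ hQV => Stmt12X.main I (fun _ => V) hV QV κ hQV X⟩


end Stmt12
end

section
/- Let 𝒜 be an (Ab.3) abelian category and V an object. If V is Ext^1-universal, then Ext^1(V,A) is a set (as opposed to a proper class) for every object A. Moreover, if ⨿^1_I V = 0 for every set I, then the converse holds: if Ext^1(V,A) is a set for every object A, then V is Ext^1-universal. -/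
/-!
Common definitions for formalizing results of "Tilting preenvelopes and cotilting
precovers in general Abelian categories" (Parra–Saorín–Virili).

Conventions:
* Full subcategories of an abelian category `C` are encoded as `Set C`.
* "Sets" (index sets of families, coproducts, …) are encoded as types in the universe `v`
  of the morphisms of `C`.
* `Ext¹(X,Y) = 0` is encoded via the splitting of all short exact sequences
  `0 → Y → E → X → 0` (equivalently, the vanishing of the Yoneda Ext group).
* Relative (`…In B`) notions encode the corresponding notion computed inside the
  full (abelian exact) subcategory determined by `B : Set C`; the ambient case is
  `B = Set.univ`.
* Coproducts are not assumed to exist: a coproduct of a family existing in the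
  (sub)category is encoded by a cocone with the universal property (`IsCoproductIn`).
-/

open CategoryTheory CategoryTheory.Limits

universe w v u

attribute [local instance] CategoryTheory.Abelian.hasFiniteBiproducts

/-!
STATEMENT 13 (Proposition `prop_ext_univ_infinite`).
"`Ext¹(V,A)` is a set (as opposed to a proper class)" is encoded by the `v`-smallness
of the class `ExtClass V A` of Yoneda-equivalence classes of extensions.
-/

namespace Stmt13

open Paper CategoryTheory CategoryTheory.Limits

variable {C : Type u} [Category.{v} C] [Abelian C]


section Aux

lemma ι_map {I : Type v} {f g : I → C} [HasCoproduct f] [HasCoproduct g]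
    (p : ∀ i, f i ⟶ g i) (i : I) :
    Sigma.ι f i ≫ Limits.Sigma.map p = p i ≫ Sigma.ι g i := by
  simp [Limits.Sigma.map]

lemma isCoproductIn_univ {I : Type v} (f : I → C) [HasCoproduct f] :
    IsCoproductIn (Set.univ : Set C) f (∐ f) (Sigma.ι f) where
  mem _ := trivial
  memQ := trivial
  desc Z _ g := ⟨Sigma.desc g, fun i => Sigma.ι_desc _ _,
    fun h hh => Sigma.hom_ext _ _ (fun i => by rw [hh i, Sigma.ι_desc])⟩

lemma aux_pullback {A X P V : C} {u : A ⟶ X} {p : X ⟶ P} {w : u ≫ p = 0}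
    (hse : (ShortComplex.mk u p w).ShortExact) (h : V ⟶ P) :
    IsShortExact (pullback.lift u 0 (by rw [w, zero_comp]) : A ⟶ pullback p h)
      (pullback.snd p h) := by
  haveI hm : Mono u := hse.mono_f
  haveI he : Epi p := hse.epi_g
  set l : A ⟶ pullback p h := pullback.lift u 0 (by rw [w, zero_comp]) with hl
  have hlf : l ≫ pullback.fst p h = u := pullback.lift_fst _ _ _
  have hls : l ≫ pullback.snd p h = 0 := pullback.lift_snd _ _ _
  haveI hmono : Mono l := by
    have : Mono (l ≫ pullback.fst p h) := by rw [hlf]; infer_instance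
    exact mono_of_mono l (pullback.fst p h)
  refine ⟨hls, ShortComplex.ShortExact.mk' ?_ hmono inferInstance⟩
  apply ShortComplex.exact_of_f_is_kernel
  refine KernelFork.IsLimit.ofι' l hls (fun {T} k hk => ?_)
  have hk' : (k ≫ pullback.fst p h) ≫ p = 0 := by
    rw [Category.assoc, pullback.condition, ← Category.assoc, hk, zero_comp]
  refine ⟨hse.exact.lift (k ≫ pullback.fst p h) hk', ?_⟩
  apply pullback.hom_ext
  · rw [Category.assoc, hlf]
    exact hse.exact.lift_f _ _
  · rw [Category.assoc, hls, comp_zero, hk]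

lemma aux_pushout {A' Q P A : C} {m : A' ⟶ Q} {q : Q ⟶ P} {w : m ≫ q = 0}
    (hse : (ShortComplex.mk m q w).ShortExact) (c : A' ⟶ A) :
    IsShortExact (pushout.inr m c)
      (pushout.desc q 0 (by rw [w, comp_zero]) : pushout m c ⟶ P) := by
  haveI hm : Mono m := hse.mono_f
  haveI he : Epi q := hse.epi_g
  set p : pushout m c ⟶ P := pushout.desc q 0 (by rw [w, comp_zero]) with hp
  have hpl : pushout.inl m c ≫ p = q := pushout.inl_desc _ _ _
  have hpr : pushout.inr m c ≫ p = 0 := pushout.inr_desc _ _ _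
  haveI hepi : Epi p := by
    have : Epi (pushout.inl m c ≫ p) := by rw [hpl]; infer_instance
    exact epi_of_epi (pushout.inl m c) p
  refine ⟨hpr, ShortComplex.ShortExact.mk' ?_ inferInstance hepi⟩
  apply ShortComplex.exact_of_g_is_cokernel
  refine CokernelCofork.IsColimit.ofπ' p hpr (fun {T} k hk => ?_)
  have hk' : m ≫ (pushout.inl m c ≫ k) = 0 := by
    rw [← Category.assoc, pushout.condition, Category.assoc, hk, comp_zero]
  refine ⟨hse.exact.desc (pushout.inl m c ≫ k) hk', ?_⟩
  apply pushout.hom_ext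
  · rw [← Category.assoc, hpl]
    exact hse.exact.g_desc _ _
  · rw [← Category.assoc, hpr, zero_comp, hk]

lemma extRel_equiv (X Y : C) : Equivalence (extRel X Y) := by
  constructor
  · rintro ⟨E, i, p, hse⟩
    exact ⟨𝟙 E, Category.comp_id _, Category.id_comp _⟩
  · rintro ⟨E₁, i₁, p₁, w₁, hse₁⟩ ⟨E₂, i₂, p₂, w₂, hse₂⟩ ⟨φ, hφ₁, hφ₂⟩
    dsimp at φ hφ₁ hφ₂ ⊢
    haveI : Mono i₁ := hse₁.mono_f
    haveI : Mono i₂ := hse₂.mono_f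
    haveI : Epi p₁ := hse₁.epi_g
    haveI : Epi p₂ := hse₂.epi_g
    haveI : Mono φ := by
      apply Preadditive.mono_of_cancel_zero
      intro T g hg
      have hg' : g ≫ (ShortComplex.mk i₁ p₁ w₁).g = 0 :=
        calc g ≫ p₁ = (g ≫ φ) ≫ p₂ := by rw [Category.assoc, hφ₂]
        _ = 0 := by rw [hg, zero_comp]
      have h1 : hse₁.exact.lift g hg' ≫ i₁ = g := hse₁.exact.lift_f g hg'
      have h2 : hse₁.exact.lift g hg' = 0 := by
        apply zero_of_comp_mono i₂
        rw [← hφ₁, ← Category.assoc, h1, hg]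
      rw [← h1, h2, zero_comp]
    haveI : Epi φ := by
      apply Preadditive.epi_of_cancel_zero
      intro T g hg
      have hg' : (ShortComplex.mk i₂ p₂ w₂).f ≫ g = 0 :=
        calc i₂ ≫ g = i₁ ≫ (φ ≫ g) := by rw [← Category.assoc, hφ₁]
        _ = 0 := by rw [hg, comp_zero]
      have h1 : p₂ ≫ hse₂.exact.desc g hg' = g := hse₂.exact.g_desc g hg'
      have h2 : hse₂.exact.desc g hg' = 0 := by
        apply zero_of_epi_comp p₁
        rw [← hφ₂, Category.assoc, h1, hg]
      rw [← h1, h2, comp_zero]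
    haveI : IsIso φ := isIso_of_mono_of_epi φ
    refine ⟨inv φ, ?_, ?_⟩
    · show i₂ ≫ inv φ = i₁
      rw [← hφ₁, Category.assoc, IsIso.hom_inv_id, Category.comp_id]
    · show inv φ ≫ p₁ = p₂
      rw [← hφ₂, ← Category.assoc, IsIso.inv_hom_id, Category.id_comp]
  · rintro ⟨E₁, i₁, p₁, h₁⟩ ⟨E₂, i₂, p₂, h₂⟩ ⟨E₃, i₃, p₃, h₃⟩ ⟨φ, hφ₁, hφ₂⟩ ⟨ψ, hψ₁, hψ₂⟩
    exact ⟨φ ≫ ψ, by rw [← Category.assoc, hφ₁, hψ₁],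
      by rw [Category.assoc, hψ₂, hφ₂]⟩

lemma extClass_nonempty (X Y : C) : Nonempty (ExtClass X Y) := by
  refine ⟨Quot.mk _ ⟨Y ⊞ X, biprod.inl, biprod.snd, biprod.inl_snd, ?_⟩⟩
  exact ShortComplex.Splitting.shortExact
    { r := biprod.fst, s := biprod.inr }

end Aux

theorem statement13 [HasCoproducts.{v} C] (V : C) :
    -- if `V` is `Ext¹`-universal then each `Ext¹(V, A)` is a set:
    (IsExt1UniversalIn Set.univ V → ∀ A : C, Small.{v} (ExtClass V A)) ∧
    -- conversely, if moreover `∐¹_I V = 0` for every set `I`: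
    ((∀ I : Type v, CoprodDerivedZero I V) →
      (∀ A : C, Small.{v} (ExtClass V A)) → IsExt1UniversalIn Set.univ V) := by
  constructor
  · -- direction 1
    intro hU A
    obtain ⟨X, u, -, -, ⟨J, hJ, P, κ, p, hcop, hse⟩, hlift⟩ := hU A trivial
    obtain ⟨w, hsep⟩ := hse
    let F : (V ⟶ P) → ExtClass V A := fun h =>
      Quot.mk _ ⟨pullback p h, pullback.lift u 0 (by rw [w, zero_comp]),
        pullback.snd p h, aux_pullback hsep h⟩
    refine small_of_surjective (f := F) ?_
    intro x
    obtain ⟨⟨E, i, q, hq⟩, rfl⟩ := Quot.exists_rep x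
    obtain ⟨wq, hseq⟩ := hq
    obtain ⟨ψ, hψ⟩ := hlift E trivial i q ⟨wq, hseq⟩
    haveI : Epi (ShortComplex.mk i q wq).g := hseq.epi_g
    have hz : (ShortComplex.mk i q wq).f ≫ (ψ ≫ p) = 0 := by
      dsimp; rw [← Category.assoc, hψ, w]
    refine ⟨hseq.exact.desc (ψ ≫ p) hz, ?_⟩
    have hqh : q ≫ hseq.exact.desc (ψ ≫ p) hz = ψ ≫ p := hseq.exact.g_desc _ _
    refine (Quot.sound ?_).symm
    refine ⟨pullback.lift ψ q hqh.symm, ?_, ?_⟩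
    · dsimp
      apply pullback.hom_ext
      · rw [Category.assoc, pullback.lift_fst, pullback.lift_fst, hψ]
      · rw [Category.assoc, pullback.lift_snd, pullback.lift_snd, wq]
    · exact pullback.lift_snd _ _ _
  · -- direction 2
    intro hco hsmall A _
    haveI := hsmall A
    haveI hne : Nonempty (ExtClass V A) := extClass_nonempty V A
    haveI hneK : Nonempty (Shrink.{v} (ExtClass V A)) :=
      ⟨equivShrink _ (Classical.arbitrary _)⟩
    set K := Shrink.{v} (ExtClass V A) with hK
    have hrep : ∀ k : K, ∃ e : ExtElem V A,
        Quot.mk _ e = (equivShrink (ExtClass V A)).symm k := fun k => Quot.exists_rep _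
    choose e he using hrep
    let Ek : K → C := fun k => (e k).1
    let ik : ∀ k, A ⟶ Ek k := fun k => (e k).2.1
    let qk : ∀ k, Ek k ⟶ V := fun k => (e k).2.2.1
    have hsek : ∀ k, IsShortExact (ik k) (qk k) := fun k => (e k).2.2.2
    have wk : ∀ k, ik k ≫ qk k = 0 := fun k => (hsek k).choose
    haveI hmonok : ∀ k, Mono (ik k) := fun k => (hsek k).choose_spec.mono_f
    haveI hepik : ∀ k, Epi (qk k) := fun k => (hsek k).choose_spec.epi_g
    let m : (∐ fun _ : K => A) ⟶ ∐ Ek := Limits.Sigma.map ik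
    let qq : (∐ Ek) ⟶ ∐ (fun _ : K => V) := Limits.Sigma.map qk
    haveI hmono_m : Mono m := by
      refine hco K (fun _ => A) Ek ik qk hsek _ _ _ _ m
        (isCoproductIn_univ _) (isCoproductIn_univ _) (fun k => ι_map ik k)
    haveI hepi_qq : Epi qq := inferInstance
    have w_mq : m ≫ qq = 0 := by
      apply Sigma.hom_ext
      intro k
      rw [← Category.assoc, ι_map, Category.assoc, ι_map, ← Category.assoc, wk k,
        zero_comp, comp_zero]
    have hse_mq : (ShortComplex.mk m qq w_mq).ShortExact := by
      refine ShortComplex.ShortExact.mk' ?_ hmono_m hepi_qq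
      apply ShortComplex.exact_of_g_is_cokernel
      refine CokernelCofork.IsColimit.ofπ' qq w_mq (fun {T} t ht => ?_)
      have hts : ∀ k, ik k ≫ (Sigma.ι Ek k ≫ t) = 0 := by
        intro k
        rw [← Category.assoc, ← ι_map ik k, Category.assoc, ht, comp_zero]
      have hts' : ∀ k, (ShortComplex.mk (ik k) (qk k) (wk k)).f ≫ (Sigma.ι Ek k ≫ t) = 0 :=
        fun k => hts k
      refine ⟨Sigma.desc (fun k => ((hsek k).choose_spec.exact.desc _ (hts' k))), ?_⟩
      apply Sigma.hom_ext
      intro k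
      rw [← Category.assoc, ι_map, Category.assoc, Sigma.ι_desc]
      exact (hsek k).choose_spec.exact.g_desc _ _
    let c : (∐ fun _ : K => A) ⟶ A := Sigma.desc (fun _ => 𝟙 A)
    have hses := aux_pushout hse_mq c
    refine ⟨pushout m c, pushout.inr m c, trivial, trivial,
      ⟨K, hneK, ∐ (fun _ : K => V), Sigma.ι _, pushout.desc qq 0 (by rw [w_mq, comp_zero]),
        isCoproductIn_univ _, hses⟩, ?_⟩
    intro E _ i q hq
    set k := equivShrink (ExtClass V A) (Quot.mk _ (⟨E, i, q, hq⟩ : ExtElem V A)) with hk'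
    have hrel : extRel V A ⟨E, i, q, hq⟩ (e k) := by
      apply (extRel_equiv V A).eqvGen_iff.mp
      refine Quot.eqvGen_exact ?_
      rw [he k, hk']
      exact (Equiv.symm_apply_apply _ _).symm
    obtain ⟨φ, hφ₁, hφ₂⟩ := hrel
    refine ⟨φ ≫ Sigma.ι Ek k ≫ pushout.inl m c, ?_⟩
    have h1 : i ≫ φ = ik k := hφ₁
    rw [← Category.assoc, h1, ← Category.assoc, ← ι_map ik k, Category.assoc,
      pushout.condition, ← Category.assoc]
    have h2 : Sigma.ι (fun _ : K => A) k ≫ c = 𝟙 A := Sigma.ι_desc _ _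
    rw [h2, Category.id_comp]


end Stmt13
end

section
/- Let 𝒜 be a Hom-finite abelian category over a commutative ring R. Then: (1) for every object A, the endomorphism ring End_𝒜(A) is a left and right coherent ring; (2) for all objects A, B, the group Hom_𝒜(A,B) is finitely presented both as a left End_𝒜(B)-module and as a right End_𝒜(A)-module; (3) for every infinite set I there is no nonzero object X such that the coproduct X^{(I)} exists in 𝒜. -/
/-!
Common definitions for formalizing results of "Tilting preenvelopes and cotilting
precovers in general Abelian categories" (Parra–Saorín–Virili).

Conventions:
* Full subcategories of an abelian category `C` are encoded as `Set C`.
* "Sets" (index sets of families, coproducts, …) are encoded as types in the universe `v`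
  of the morphisms of `C`.
* `Ext¹(X,Y) = 0` is encoded via the splitting of all short exact sequences
  `0 → Y → E → X → 0` (equivalently, the vanishing of the Yoneda Ext group).
* Relative (`…In B`) notions encode the corresponding notion computed inside the
  full (abelian exact) subcategory determined by `B : Set C`; the ambient case is
  `B = Set.univ`.
* Coproducts are not assumed to exist: a coproduct of a family existing in the
  (sub)category is encoded by a cocone with the universal property (`IsCoproductIn`).
-/

open CategoryTheory CategoryTheory.Limits

universe w v u

attribute [local instance] CategoryTheory.Abelian.hasFiniteBiproducts

/-!
STATEMENT 15 (Proposition `prop.Hom-finite-are-coherent`).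
-/

namespace Stmt15

open Paper CategoryTheory CategoryTheory.Limits

variable {C : Type u} [Category.{v} C] [Abelian C]

/-- `Hom(A, B)` as a right `End(A)`-module (by precomposition), encoded as a left
module over the opposite ring. -/
instance homModuleEndOp (A B : C) : Module (End A)ᵐᵒᵖ (A ⟶ B) where
  smul φ f := φ.unop ≫ f
  one_smul f := Category.id_comp f
  mul_smul φ ψ f := by
    show (ψ.unop * φ.unop) ≫ f = φ.unop ≫ ψ.unop ≫ f
    show (φ.unop ≫ ψ.unop) ≫ f = φ.unop ≫ ψ.unop ≫ f
    rw [Category.assoc]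
  smul_zero φ := Limits.comp_zero
  smul_add φ f g := Preadditive.comp_add _ _ _ _ _ _
  add_smul φ ψ f := by
    show (φ.unop + ψ.unop) ≫ f = φ.unop ≫ f + ψ.unop ≫ f
    exact Preadditive.add_comp _ _ _ _ _ _
  zero_smul f := Limits.zero_comp

theorem op_smul_def {A B : C} (φ : (End A)ᵐᵒᵖ) (f : A ⟶ B) : φ • f = φ.unop ≫ f := rfl

theorem finite_of_smul_factor {R₀ S M : Type*} [Semiring R₀] [Semiring S]
    [AddCommMonoid M] [Module R₀ M] [Module S M] (σ : R₀ → S)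
    (h : ∀ (r : R₀) (x : M), r • x = σ r • x) (hf : Module.Finite R₀ M) :
    Module.Finite S M := by
  obtain ⟨s, hs⟩ := hf.fg_top
  have key : ∀ x : M, x ∈ Submodule.span R₀ (s : Set M) → x ∈ Submodule.span S (s : Set M) := by
    intro x hx
    induction hx using Submodule.span_induction with
    | mem x hx => exact Submodule.subset_span hx
    | zero => exact zero_mem _
    | add x y _ _ hx hy => exact add_mem hx hy
    | smul r x _ hx => rw [h]; exact Submodule.smul_mem _ _ hx
  exact ⟨⟨s, eq_top_iff.mpr fun x _ => key x (by rw [hs]; trivial)⟩⟩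

variable (R : Type v) [CommRing R] [CategoryTheory.Linear R C]

theorem finite_end_left (hfin : ∀ A B : C, Module.Finite R (A ⟶ B)) (A B : C) :
    Module.Finite (End B) (A ⟶ B) :=
  finite_of_smul_factor (fun r => ((r • 𝟙 B : B ⟶ B) : End B))
    (fun r f => by rw [End.smul_right, Linear.comp_smul, Category.comp_id]) (hfin A B)

theorem finite_end_right (hfin : ∀ A B : C, Module.Finite R (A ⟶ B)) (A B : C) :
    Module.Finite (End A)ᵐᵒᵖ (A ⟶ B) :=
  finite_of_smul_factor (fun r => MulOpposite.op ((r • 𝟙 A : A ⟶ A) : End A))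
    (fun r f => by rw [op_smul_def, MulOpposite.unop_op, Linear.smul_comp, Category.id_comp])
    (hfin A B)

section LiftMap

variable {A B : C} {n : ℕ}

/-- Evaluation `s ↦ ∑ gᵢ ≫ sᵢ` as a left `End B`-linear map. -/
noncomputable def liftMap (g : Fin n → (A ⟶ B)) : (Fin n → End B) →ₗ[End B] (A ⟶ B) where
  toFun s := biproduct.lift g ≫ biproduct.desc (fun i => (s i : B ⟶ B))
  map_add' s t := by
    have h : biproduct.desc (fun i => ((s + t) i : B ⟶ B)) =
        biproduct.desc (fun i => (s i : B ⟶ B)) + biproduct.desc (fun i => (t i : B ⟶ B)) := by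
      apply biproduct.hom_ext'
      intro j
      rw [biproduct.ι_desc, Preadditive.comp_add, biproduct.ι_desc, biproduct.ι_desc]
      rfl
    show biproduct.lift g ≫ biproduct.desc (fun i => ((s + t) i : B ⟶ B)) =
      biproduct.lift g ≫ biproduct.desc (fun i => (s i : B ⟶ B)) +
      biproduct.lift g ≫ biproduct.desc (fun i => (t i : B ⟶ B))
    rw [h, Preadditive.comp_add]
  map_smul' φ s := by
    have h : biproduct.desc (fun i => ((φ • s) i : B ⟶ B)) =
        biproduct.desc (fun i => (s i : B ⟶ B)) ≫ φ := by
      apply biproduct.hom_ext'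
      intro j
      rw [biproduct.ι_desc, biproduct.ι_desc_assoc]
      rfl
    show biproduct.lift g ≫ biproduct.desc (fun i => ((φ • s) i : B ⟶ B)) =
      φ • (biproduct.lift g ≫ biproduct.desc (fun i => (s i : B ⟶ B)))
    rw [h, End.smul_right, Category.assoc]

theorem liftMap_def (g : Fin n → (A ⟶ B)) (s : Fin n → End B) :
    liftMap g s = biproduct.lift g ≫ biproduct.desc (fun i => (s i : B ⟶ B)) := rfl

theorem liftMap_apply (g : Fin n → (A ⟶ B)) (s : Fin n → End B) :
    liftMap g s = ∑ i, s i • g i := by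
  rw [liftMap_def, biproduct.lift_desc]
  exact Finset.sum_congr rfl fun i _ => rfl

theorem ker_liftMap_fg (hfin : ∀ A B : C, Module.Finite R (A ⟶ B)) (g : Fin n → (A ⟶ B)) :
    (LinearMap.ker (liftMap g)).FG := by
  classical
  let γ : A ⟶ ⨁ (fun _ : Fin n => B) := biproduct.lift g
  let Ψ : (cokernel γ ⟶ B) →ₗ[End B] (Fin n → End B) :=
    { toFun := fun u i => ((biproduct.ι (fun _ : Fin n => B) i ≫ cokernel.π γ ≫ u : B ⟶ B) : End B)
      map_add' := fun u v => by
        funext i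
        show biproduct.ι (fun _ : Fin n => B) i ≫ cokernel.π γ ≫ (u + v) =
          (biproduct.ι (fun _ : Fin n => B) i ≫ cokernel.π γ ≫ u) +
          (biproduct.ι (fun _ : Fin n => B) i ≫ cokernel.π γ ≫ v)
        rw [Preadditive.comp_add, Preadditive.comp_add]
      map_smul' := fun φ u => by
        funext i
        show biproduct.ι (fun _ : Fin n => B) i ≫ cokernel.π γ ≫ (u ≫ φ) =
          (biproduct.ι (fun _ : Fin n => B) i ≫ cokernel.π γ ≫ u) ≫ φ
        simp only [Category.assoc] }
  have hker : LinearMap.ker (liftMap g) = LinearMap.range Ψ := by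
    apply le_antisymm
    · intro s hs
      have hs' : γ ≫ biproduct.desc (fun i => (s i : B ⟶ B)) = 0 := LinearMap.mem_ker.mp hs
      refine ⟨cokernel.desc γ (biproduct.desc (fun i => (s i : B ⟶ B))) hs', ?_⟩
      funext i
      show biproduct.ι (fun _ : Fin n => B) i ≫ cokernel.π γ ≫
        cokernel.desc γ (biproduct.desc (fun i => (s i : B ⟶ B))) hs' = s i
      rw [cokernel.π_desc, biproduct.ι_desc]
    · rintro _ ⟨u, rfl⟩
      rw [LinearMap.mem_ker, liftMap_def]
      have hdesc : biproduct.desc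
          (fun i => ((Ψ u i : B ⟶ B))) = cokernel.π γ ≫ u := by
        ext j
        rw [biproduct.ι_desc]
        rfl
      rw [hdesc, ← Category.assoc,
        show biproduct.lift g ≫ cokernel.π γ = 0 from cokernel.condition γ, Limits.zero_comp]
  rw [hker, ← Submodule.map_top]
  exact Submodule.FG.map _ (Module.Finite.fg_top (R := End B) (M := (cokernel γ ⟶ B))
    (self := finite_end_left R hfin (cokernel γ) B))

end LiftMap

theorem fp_left (hfin : ∀ A B : C, Module.Finite R (A ⟶ B)) (A B : C) :
    Module.FinitePresentation (End B) (A ⟶ B) := by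
  haveI := finite_end_left R hfin A B
  obtain ⟨n, g, hg⟩ := Module.Finite.exists_fin (R := End B) (M := (A ⟶ B))
  refine Module.finitePresentation_of_free_of_surjective (liftMap g) ?_ (ker_liftMap_fg R hfin g)
  intro x
  have hx : x ∈ Submodule.span (End B) (Set.range g) := by rw [hg]; trivial
  obtain ⟨c, hc⟩ := (Submodule.mem_span_range_iff_exists_fun _).mp hx
  exact ⟨c, by rw [liftMap_apply]; exact hc⟩

/-- Evaluation `s ↦ ∑ sᵢ * fᵢ` as a left `End A`-linear map into `End A`. -/
noncomputable def selfMap {A : C} {n : ℕ} (f : Fin n → End A) :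
    (Fin n → End A) →ₗ[End A] End A where
  toFun s := ((biproduct.lift (fun i => (f i : A ⟶ A)) ≫
    biproduct.desc (fun i => (s i : A ⟶ A)) : A ⟶ A) : End A)
  map_add' s t := by
    have h := (liftMap (A := A) (B := A) (fun i => (f i : A ⟶ A))).map_add' s t
    exact h
  map_smul' φ s := by
    have h := (liftMap (A := A) (B := A) (fun i => (f i : A ⟶ A))).map_smul' φ s
    exact h

theorem selfMap_eq_liftMap {A : C} {n : ℕ} (f : Fin n → End A) (s : Fin n → End A) :
    selfMap f s = liftMap (fun i => (f i : A ⟶ A)) s := rfl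

theorem selfMap_apply {A : C} {n : ℕ} (f : Fin n → End A) (s : Fin n → End A) :
    selfMap f s = ∑ i, s i • f i := by
  rw [selfMap_eq_liftMap, liftMap_apply]

theorem ker_selfMap_fg (hfin : ∀ A B : C, Module.Finite R (A ⟶ B)) {A : C} {n : ℕ}
    (f : Fin n → End A) : (LinearMap.ker (selfMap f)).FG := by
  have h : LinearMap.ker (selfMap f) = LinearMap.ker (liftMap (fun i => (f i : A ⟶ A))) := by
    ext s
    exact Iff.rfl
  rw [h]
  exact ker_liftMap_fg R hfin _

theorem left_coh (hfin : ∀ A B : C, Module.Finite R (A ⟶ B)) (A : C) :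
    Paper.LeftCoherentRing (End A) := by
  intro J hJ
  obtain ⟨n, f, hf⟩ := Submodule.fg_iff_exists_fin_generating_family.mp hJ
  have hmem : ∀ s, selfMap f s ∈ J := by
    intro s
    rw [selfMap_apply, ← hf]
    exact Submodule.sum_mem _ fun i _ =>
      Submodule.smul_mem _ _ (Submodule.subset_span ⟨i, rfl⟩)
  refine Module.finitePresentation_of_free_of_surjective
    (LinearMap.codRestrict J (selfMap f) hmem) ?_ ?_
  · rintro ⟨x, hx⟩
    rw [← hf] at hx
    obtain ⟨c, hc⟩ := (Submodule.mem_span_range_iff_exists_fun _).mp hx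
    refine ⟨c, Subtype.ext ?_⟩
    show selfMap f c = x
    rw [selfMap_apply]
    exact hc
  · rw [LinearMap.ker_codRestrict]
    exact ker_selfMap_fg R hfin f

section DescMap

open MulOpposite

variable {A B : C} {n : ℕ}

/-- Evaluation `s ↦ ∑ sᵢ ≫ gᵢ` as a left `(End A)ᵐᵒᵖ`-linear map. -/
noncomputable def descMap (g : Fin n → (A ⟶ B)) :
    (Fin n → (End A)ᵐᵒᵖ) →ₗ[(End A)ᵐᵒᵖ] (A ⟶ B) where
  toFun s := biproduct.lift (fun i => ((s i).unop : A ⟶ A)) ≫ biproduct.desc g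
  map_add' s t := by
    have h : biproduct.lift (fun i => (((s + t) i).unop : A ⟶ A)) =
        biproduct.lift (fun i => ((s i).unop : A ⟶ A)) +
        biproduct.lift (fun i => ((t i).unop : A ⟶ A)) := by
      apply biproduct.hom_ext
      intro j
      rw [biproduct.lift_π, Preadditive.add_comp, biproduct.lift_π, biproduct.lift_π]
      rfl
    show biproduct.lift (fun i => (((s + t) i).unop : A ⟶ A)) ≫ biproduct.desc g =
      biproduct.lift (fun i => ((s i).unop : A ⟶ A)) ≫ biproduct.desc g +
      biproduct.lift (fun i => ((t i).unop : A ⟶ A)) ≫ biproduct.desc g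
    rw [h, Preadditive.add_comp]
  map_smul' φ s := by
    have h : biproduct.lift (fun i => (((φ • s) i).unop : A ⟶ A)) =
        (φ.unop : A ⟶ A) ≫ biproduct.lift (fun i => ((s i).unop : A ⟶ A)) := by
      apply biproduct.hom_ext
      intro j
      rw [biproduct.lift_π, Category.assoc, biproduct.lift_π]
      rfl
    show biproduct.lift (fun i => (((φ • s) i).unop : A ⟶ A)) ≫ biproduct.desc g =
      φ • (biproduct.lift (fun i => ((s i).unop : A ⟶ A)) ≫ biproduct.desc g)
    rw [h, op_smul_def, Category.assoc]

theorem descMap_def (g : Fin n → (A ⟶ B)) (s : Fin n → (End A)ᵐᵒᵖ) :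
    descMap g s = biproduct.lift (fun i => ((s i).unop : A ⟶ A)) ≫ biproduct.desc g := rfl

theorem descMap_apply (g : Fin n → (A ⟶ B)) (s : Fin n → (End A)ᵐᵒᵖ) :
    descMap g s = ∑ i, s i • g i := by
  rw [descMap_def, biproduct.lift_desc]
  exact Finset.sum_congr rfl fun i _ => rfl

theorem ker_descMap_fg (hfin : ∀ A B : C, Module.Finite R (A ⟶ B)) (g : Fin n → (A ⟶ B)) :
    (LinearMap.ker (descMap g)).FG := by
  classical
  let δ : (⨁ (fun _ : Fin n => A)) ⟶ B := biproduct.desc g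
  let Ψ : (A ⟶ kernel δ) →ₗ[(End A)ᵐᵒᵖ] (Fin n → (End A)ᵐᵒᵖ) :=
    { toFun := fun v i => op
        ((v ≫ kernel.ι δ ≫ biproduct.π (fun _ : Fin n => A) i : A ⟶ A) : End A)
      map_add' := fun u v => by
        funext i
        show op (((u + v) ≫ kernel.ι δ ≫ biproduct.π (fun _ : Fin n => A) i : A ⟶ A) : End A) =
          op ((u ≫ kernel.ι δ ≫ biproduct.π (fun _ : Fin n => A) i : A ⟶ A) : End A) +
          op ((v ≫ kernel.ι δ ≫ biproduct.π (fun _ : Fin n => A) i : A ⟶ A) : End A)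
        rw [Preadditive.add_comp]
        rfl
      map_smul' := fun φ v => by
        funext i
        show op ((((φ • v) : A ⟶ kernel δ) ≫ kernel.ι δ ≫ biproduct.π (fun _ : Fin n => A) i :
            A ⟶ A) : End A) = _
        rw [op_smul_def, Category.assoc]
        rfl }
  have hker : LinearMap.ker (descMap g) = LinearMap.range Ψ := by
    apply le_antisymm
    · intro s hs
      have hs' : biproduct.lift (fun i => ((s i).unop : A ⟶ A)) ≫ δ = 0 :=
        LinearMap.mem_ker.mp hs
      refine ⟨kernel.lift δ (biproduct.lift (fun i => ((s i).unop : A ⟶ A))) hs', ?_⟩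
      funext i
      show op ((kernel.lift δ (biproduct.lift (fun i => ((s i).unop : A ⟶ A))) hs' ≫
        kernel.ι δ ≫ biproduct.π (fun _ : Fin n => A) i : A ⟶ A) : End A) = s i
      rw [← Category.assoc, kernel.lift_ι, biproduct.lift_π]
      exact MulOpposite.op_unop (s i)
    · rintro _ ⟨v, rfl⟩
      rw [LinearMap.mem_ker, descMap_def]
      have hlift : biproduct.lift (fun i => ((Ψ v i).unop : A ⟶ A)) = v ≫ kernel.ι δ := by
        apply biproduct.hom_ext
        intro j
        rw [biproduct.lift_π, Category.assoc]
        rfl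
      rw [hlift, Category.assoc]
      rw [show kernel.ι δ ≫ biproduct.desc g = 0 from kernel.condition δ, Limits.comp_zero]
  rw [hker, ← Submodule.map_top]
  exact Submodule.FG.map _ (Module.Finite.fg_top (R := (End A)ᵐᵒᵖ) (M := (A ⟶ kernel δ))
    (self := finite_end_right R hfin A (kernel δ)))

end DescMap

theorem fp_right (hfin : ∀ A B : C, Module.Finite R (A ⟶ B)) (A B : C) :
    Module.FinitePresentation (End A)ᵐᵒᵖ (A ⟶ B) := by
  haveI := finite_end_right R hfin A B
  obtain ⟨n, g, hg⟩ := Module.Finite.exists_fin (R := (End A)ᵐᵒᵖ) (M := (A ⟶ B))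
  refine Module.finitePresentation_of_free_of_surjective (descMap g) ?_ (ker_descMap_fg R hfin g)
  intro x
  have hx : x ∈ Submodule.span (End A)ᵐᵒᵖ (Set.range g) := by rw [hg]; trivial
  obtain ⟨c, hc⟩ := (Submodule.mem_span_range_iff_exists_fun _).mp hx
  exact ⟨c, by rw [descMap_apply]; exact hc⟩

section SelfMapOp

open MulOpposite

variable {A : C} {n : ℕ}

/-- Evaluation `s ↦ ∑ sᵢ * fᵢ` as a left `(End A)ᵐᵒᵖ`-linear map into `(End A)ᵐᵒᵖ`. -/
noncomputable def selfMapOp (f : Fin n → (End A)ᵐᵒᵖ) :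
    (Fin n → (End A)ᵐᵒᵖ) →ₗ[(End A)ᵐᵒᵖ] (End A)ᵐᵒᵖ where
  toFun s := op ((biproduct.lift (fun i => ((s i).unop : A ⟶ A)) ≫
      biproduct.desc (fun i => ((f i).unop : A ⟶ A)) : A ⟶ A) : End A)
  map_add' s t := by
    show op ((descMap (fun i => ((f i).unop : A ⟶ A)) (s + t) : A ⟶ A) : End A) =
      op ((descMap (fun i => ((f i).unop : A ⟶ A)) s : A ⟶ A) : End A) +
      op ((descMap (fun i => ((f i).unop : A ⟶ A)) t : A ⟶ A) : End A)
    rw [map_add]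
    rfl
  map_smul' φ s := by
    show op ((descMap (fun i => ((f i).unop : A ⟶ A)) (φ • s) : A ⟶ A) : End A) =
      φ • op ((descMap (fun i => ((f i).unop : A ⟶ A)) s : A ⟶ A) : End A)
    rw [map_smul]
    rfl

theorem selfMapOp_eq (f : Fin n → (End A)ᵐᵒᵖ) (s : Fin n → (End A)ᵐᵒᵖ) :
    selfMapOp f s = op ((descMap (fun i => ((f i).unop : A ⟶ A)) s : A ⟶ A) : End A) := rfl

theorem op_hom_sum {A : C} {ι : Type*} (t : Finset ι) (u : ι → (A ⟶ A)) :
    op ((∑ i ∈ t, u i : A ⟶ A) : End A) = ∑ i ∈ t, op ((u i : A ⟶ A) : End A) := by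
  classical
  induction t using Finset.cons_induction with
  | empty => rw [Finset.sum_empty, Finset.sum_empty, MulOpposite.op_zero]
  | cons i t hi ih => rw [Finset.sum_cons, Finset.sum_cons, ← ih]; rfl

theorem selfMapOp_apply (f : Fin n → (End A)ᵐᵒᵖ) (s : Fin n → (End A)ᵐᵒᵖ) :
    selfMapOp f s = ∑ i, s i • f i := by
  rw [selfMapOp_eq, descMap_apply, op_hom_sum]
  exact Finset.sum_congr rfl fun i _ => rfl

theorem ker_selfMapOp_fg (hfin : ∀ A B : C, Module.Finite R (A ⟶ B))
    (f : Fin n → (End A)ᵐᵒᵖ) : (LinearMap.ker (selfMapOp f)).FG := by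
  have h : LinearMap.ker (selfMapOp f) =
      LinearMap.ker (descMap (fun i => ((f i).unop : A ⟶ A))) := by
    ext s
    rw [LinearMap.mem_ker, LinearMap.mem_ker, selfMapOp_eq, MulOpposite.op_eq_zero_iff]
  rw [h]
  exact ker_descMap_fg R hfin _

end SelfMapOp

theorem right_coh (hfin : ∀ A B : C, Module.Finite R (A ⟶ B)) (A : C) :
    Paper.RightCoherentRing (End A) := by
  intro J hJ
  obtain ⟨n, f, hf⟩ := Submodule.fg_iff_exists_fin_generating_family.mp hJ
  have hmem : ∀ s, selfMapOp f s ∈ J := by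
    intro s
    rw [selfMapOp_apply, ← hf]
    exact Submodule.sum_mem _ fun i _ =>
      Submodule.smul_mem _ _ (Submodule.subset_span ⟨i, rfl⟩)
  refine Module.finitePresentation_of_free_of_surjective
    (LinearMap.codRestrict J (selfMapOp f) hmem) ?_ ?_
  · rintro ⟨x, hx⟩
    rw [← hf] at hx
    obtain ⟨c, hc⟩ := (Submodule.mem_span_range_iff_exists_fun _).mp hx
    refine ⟨c, Subtype.ext ?_⟩
    show selfMapOp f c = x
    rw [selfMapOp_apply]
    exact hc
  · rw [LinearMap.ker_codRestrict]
    exact ker_selfMapOp_fg R hfin f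

theorem vector_space_pi_infinite {k : Type*} [Field k] {W : Type*} [AddCommGroup W]
    [Module k W] {I : Type*} [Infinite I] (w : W) (hw : w ≠ 0)
    (hfin : Module.Finite k (I → W)) : False := by
  classical
  haveI := hfin
  have hli : LinearIndependent k (fun i : I => (Pi.single i w : I → W)) := by
    rw [linearIndependent_iff']
    intro t g hg i hi
    have h0 := congrFun hg i
    rw [Finset.sum_apply, Pi.zero_apply] at h0
    rw [Finset.sum_eq_single i (fun j _ hj => by
        rw [Pi.smul_apply, Pi.single_eq_of_ne (Ne.symm hj), smul_zero])
      (fun hit => absurd hi hit)] at h0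
    rw [Pi.smul_apply, Pi.single_eq_same] at h0
    by_contra hgi
    apply hw
    have hwe : w = (g i)⁻¹ • (g i • w) := by
      rw [smul_smul, inv_mul_cancel₀ hgi, one_smul]
    rw [hwe, h0, smul_zero]
  exact Module.Finite.not_linearIndependent_of_infinite
    (fun i : I => (Pi.single i w : I → W)) hli

theorem part3 (hfin : ∀ A B : C, Module.Finite R (A ⟶ B)) (I : Type v) (hI : Infinite I)
    (X Q : C) (ι : ∀ _ : I, X ⟶ Q)
    (hQ : Paper.IsCoproductIn Set.univ (fun _ : I => X) Q ι) : Limits.IsZero X := by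
  classical
  rw [Limits.IsZero.iff_id_eq_zero]
  by_contra hid
  haveI := hI
  haveI := hfin X X
  haveI := hfin Q X
  have hann : Module.annihilator R (X ⟶ X) ≠ ⊤ := by
    intro h
    have h1 : (1 : R) ∈ Module.annihilator R (X ⟶ X) := h ▸ Submodule.mem_top
    have := Module.mem_annihilator.mp h1 (𝟙 X)
    rw [one_smul] at this
    exact hid this
  obtain ⟨m, hmax, hle⟩ := Ideal.exists_le_maximal _ hann
  haveI := hmax
  have hne : (m • ⊤ : Submodule R (X ⟶ X)) ≠ ⊤ := by
    intro he
    obtain ⟨r, hr1, hr0⟩ := Submodule.exists_sub_one_mem_and_smul_eq_zero_of_fg_of_le_smul m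
      (⊤ : Submodule R (X ⟶ X)) Module.Finite.fg_top (le_of_eq he.symm)
    have hrm : r ∈ m := hle (Module.mem_annihilator.mpr fun x => hr0 x trivial)
    have h1 : (1 : R) ∈ m := by
      have := m.sub_mem hrm hr1
      rwa [sub_sub_cancel] at this
    exact hmax.ne_top ((Ideal.eq_top_iff_one m).mpr h1)
  let Θ : (Q ⟶ X) →ₗ[R] (I → (X ⟶ X)) :=
    { toFun := fun h i => ι i ≫ h
      map_add' := fun h h' => by
        funext i
        show ι i ≫ (h + h') = ι i ≫ h + ι i ≫ h'
        rw [Preadditive.comp_add]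
      map_smul' := fun r h => by
        funext i
        show ι i ≫ (r • h) = r • (ι i ≫ h)
        rw [Linear.comp_smul] }
  have hΘ : Function.Surjective Θ := by
    intro g
    obtain ⟨h, hh, -⟩ := hQ.desc X (Set.mem_univ X) g
    exact ⟨h, funext hh⟩
  haveI hfinI : Module.Finite R (I → (X ⟶ X)) := Module.Finite.of_surjective Θ hΘ
  let Λ : (I → (X ⟶ X)) →ₗ[R] (I → ((X ⟶ X) ⧸ (m • ⊤ : Submodule R (X ⟶ X)))) :=
    LinearMap.pi fun i => (m • ⊤ : Submodule R (X ⟶ X)).mkQ ∘ₗ LinearMap.proj i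
  have hΛ : Function.Surjective Λ := by
    intro w
    choose v hv using fun i => Submodule.Quotient.mk_surjective _ (w i)
    exact ⟨v, funext hv⟩
  haveI h1 : Module.Finite R (I → ((X ⟶ X) ⧸ (m • ⊤ : Submodule R (X ⟶ X)))) :=
    Module.Finite.of_surjective Λ hΛ
  haveI h2 : Module.Finite (R ⧸ m) (I → ((X ⟶ X) ⧸ (m • ⊤ : Submodule R (X ⟶ X)))) := by
    refine finite_of_smul_factor (Ideal.Quotient.mk m) ?_ h1
    intro r w
    funext i
    show r • (w i) = Ideal.Quotient.mk m r • (w i)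
    obtain ⟨x, hx⟩ := Submodule.Quotient.mk_surjective _ (w i)
    rw [← hx, Module.Quotient.mk_smul_mk, Submodule.Quotient.mk_smul]
  have hW : ∃ w : (X ⟶ X) ⧸ (m • ⊤ : Submodule R (X ⟶ X)), w ≠ 0 := by
    by_contra h
    push_neg at h
    apply hne
    rw [Submodule.eq_top_iff']
    intro x
    have := h (Submodule.Quotient.mk x)
    rwa [Submodule.Quotient.mk_eq_zero] at this
  obtain ⟨w, hw⟩ := hW
  letI : Field (R ⧸ m) := Ideal.Quotient.field m
  exact vector_space_pi_infinite w hw h2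


theorem statement15 (R : Type v) [CommRing R] [CategoryTheory.Linear R C]
    -- `𝒜` is `Hom`-finite over the commutative ring `R`:
    (hfin : ∀ A B : C, Module.Finite R (A ⟶ B)) :
    -- (1) every endomorphism ring is left and right coherent:
    (∀ A : C, LeftCoherentRing (End A) ∧ RightCoherentRing (End A)) ∧
    -- (2) `Hom(A,B)` is finitely presented as a left `End(B)`-module and as a right
    -- `End(A)`-module:
    (∀ A B : C, Module.FinitePresentation (End B) (A ⟶ B) ∧
      Module.FinitePresentation (End A)ᵐᵒᵖ (A ⟶ B)) ∧
    -- (3) no nonzero object has a coproduct of infinitely many copies of itself: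
    (∀ (I : Type v), Infinite I → ∀ (X Q : C) (ι : ∀ _ : I, X ⟶ Q),
      IsCoproductIn Set.univ (fun _ : I => X) Q ι → Limits.IsZero X) := by
  exact ⟨fun A => ⟨left_coh R hfin A, right_coh R hfin A⟩,
    fun A B => ⟨fp_left R hfin A B, fp_right R hfin A B⟩,
    fun I hI X Q ι h => part3 R hfin I hI X Q ι h⟩

end Stmt15
end

section
/- Let R be a nonzero commutative ring, M a nonzero finitely generated R-module and I an infinite set. Then M is not isomorphic, as an R-module, to the product M^I of I-many copies of M. -/
/-!
Common definitions for formalizing results of "Tilting preenvelopes and cotilting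
precovers in general Abelian categories" (Parra–Saorín–Virili).

Conventions:
* Full subcategories of an abelian category `C` are encoded as `Set C`.
* "Sets" (index sets of families, coproducts, …) are encoded as types in the universe `v`
  of the morphisms of `C`.
* `Ext¹(X,Y) = 0` is encoded via the splitting of all short exact sequences
  `0 → Y → E → X → 0` (equivalently, the vanishing of the Yoneda Ext group).
* Relative (`…In B`) notions encode the corresponding notion computed inside the
  full (abelian exact) subcategory determined by `B : Set C`; the ambient case is
  `B = Set.univ`.
* Coproducts are not assumed to exist: a coproduct of a family existing in the
  (sub)category is encoded by a cocone with the universal property (`IsCoproductIn`).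
-/

open CategoryTheory CategoryTheory.Limits

universe w v u

attribute [local instance] CategoryTheory.Abelian.hasFiniteBiproducts

/-!
STATEMENT 16 (Lemma `lem.no self-reproductive product over commutative`).
-/

theorem statement16 {R : Type u} [CommRing R] [Nontrivial R]
    (M : Type u) [AddCommGroup M] [Module R M] [Module.Finite R M] [Nontrivial M]
    (I : Type w) [Infinite I] :
    IsEmpty (M ≃ₗ[R] (I → M)) := by
  constructor
  intro e
  classical
  -- a maximal ideal containing the annihilator
  have hann : Module.annihilator R M ≠ ⊤ := by
    intro h
    obtain ⟨x, hx⟩ := exists_ne (0 : M)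
    have : (1 : R) ∈ Module.annihilator R M := h ▸ Submodule.mem_top
    exact hx (by simpa using Module.mem_annihilator.mp this x)
  obtain ⟨m, hmax, hle⟩ := Ideal.exists_le_maximal _ hann
  have hNne : (m • ⊤ : Submodule R M) ≠ ⊤ := by
    intro h
    obtain ⟨r, hr1, hr0⟩ :=
      Submodule.exists_sub_one_mem_and_smul_eq_zero_of_fg_of_le_smul m ⊤
        (Module.finite_def.mp ‹_›) (by rw [h])
    have hrann : r ∈ Module.annihilator R M :=
      Module.mem_annihilator.mpr fun x => hr0 x Submodule.mem_top
    have h1 : (1 : R) ∈ m := by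
      have := m.sub_mem (hle hrann) hr1
      simpa using this
    exact hmax.ne_top (Ideal.eq_top_of_isUnit_mem m h1 isUnit_one)
  -- the quotient vector space
  haveI : IsNoetherianRing (R ⧸ m) := by
    letI := Ideal.Quotient.field m; infer_instance
  haveI : Nontrivial (R ⧸ m) := Ideal.Quotient.nontrivial_iff.mpr hmax.ne_top
  haveI : Nontrivial (M ⧸ (m • ⊤ : Submodule R M)) :=
    Submodule.Quotient.nontrivial_iff.mpr hNne
  -- surjection M → (I → V)
  let π : (I → M) →ₗ[R] (I → M ⧸ (m • ⊤ : Submodule R M)) :=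
    LinearMap.pi fun i => (m • ⊤ : Submodule R M).mkQ.comp (LinearMap.proj i)
  have hπ : Function.Surjective π := by
    intro g
    choose f hf using fun i => (m • ⊤ : Submodule R M).mkQ_surjective (g i)
    exact ⟨f, funext hf⟩
  have hf : Function.Surjective (π.comp e.toLinearMap) := hπ.comp e.surjective
  haveI : Module.Finite R (I → M ⧸ (m • ⊤ : Submodule R M)) :=
    Module.Finite.of_surjective _ hf
  haveI : NoZeroSMulDivisors (R ⧸ m) (M ⧸ (m • ⊤ : Submodule R M)) := by
    letI := Ideal.Quotient.field m; infer_instance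
  haveI : IsScalarTower R (R ⧸ m) (M ⧸ (m • ⊤ : Submodule R M)) := inferInstance
  haveI : IsScalarTower R (R ⧸ m) (I → M ⧸ (m • ⊤ : Submodule R M)) :=
    Pi.isScalarTower
  haveI : Module.Finite (R ⧸ m) (I → M ⧸ (m • ⊤ : Submodule R M)) :=
    Module.Finite.of_restrictScalars_finite R _ _
  haveI : IsNoetherian (R ⧸ m) (I → M ⧸ (m • ⊤ : Submodule R M)) :=
    isNoetherian_of_isNoetherianRing_of_finite _ _
  -- a linearly independent family indexed by I
  obtain ⟨v, hv⟩ := exists_ne (0 : M ⧸ (m • ⊤ : Submodule R M))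
  have li : LinearIndependent (R ⧸ m)
      (fun i : I => Pi.single i v : I → I → M ⧸ (m • ⊤ : Submodule R M)) := by
    have h := Pi.linearIndependent_single (R := R ⧸ m) (η := I)
      (Ms := fun _ : I => M ⧸ (m • ⊤ : Submodule R M))
      (fun _ (_ : PUnit.{w+1}) => v) (fun _ => LinearIndependent.of_subsingleton PUnit.unit hv)
    have := h.comp (fun i : I => (⟨i, PUnit.unit⟩ : Σ _ : I, PUnit.{w+1}))
      (fun a b hab => congrArg Sigma.fst hab)
    exact this
  haveI := li.finite_of_isNoetherian
  exact not_finite I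
end
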